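/- arXiv:1904.13133 — 3 statements merged into one kernel-verified Lean document; each statement's English description precedes it below -/
import Mathlib

section
/- Let α be a representation of a countable discrete unital inverse semigroup S on a set X. If X is S-domain measurable, then for every ε > 0 and every finite subset 𝓕 ⊆ S there is a function h : X → [0,∞) with finite support and ∑_{x∈X} h(x) = 1 such that ∑_{x∈X} |(s*·h)(x) − ((s*s)·h)(x)| < ε for every s ∈ 𝓕. -/
open scoped ENNReal

/-- Mixin recording that a semigroup with a star operation is an inverse semigroup:
for every `s` the element `star s` is the unique `t` with `s t s = s` and `t s t = t`. -/
class IsInverseSemigroup (S : Type*) [Semigroup S] [Star S] : Prop where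
  mul_star_mul_self : ∀ s : S, s * star s * s = s
  star_mul_self_mul_star : ∀ s : S, star s * s * star s = star s
  star_unique : ∀ s t : S, s * t * s = s → t * s * t = t → t = star s

/-- A representation of a unital inverse semigroup `S` on a set `X`: a unital semigroup
homomorphism into the inverse semigroup of partial bijections of `X` (encoded as `PEquiv`s)
compatible with the involution.  The domain of the partial bijection `α s` is `D_{s*s}` and
its range is `D_{ss*}`; for an idempotent `e`, `D_e` is the domain of `α e`. -/
structure InverseSemigroupRep (S : Type*) [Monoid S] [Star S] (X : Type*) where
  α : S → X ≃. X
  map_one : α 1 = PEquiv.refl X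
  map_star : ∀ s : S, α (star s) = (α s).symm
  map_mul : ∀ s t : S, α (s * t) = (α t).trans (α s)

/-- A finitely additive `[0,∞]`-valued measure on the power set of `X`. -/
def IsFinAddMeasure {X : Type*} (μ : Set X → ℝ≥0∞) : Prop :=
  μ (∅ : Set X) = 0 ∧ ∀ A B : Set X, Disjoint A B → μ (A ∪ B) = μ A + μ B

namespace InverseSemigroupRep

variable {S X : Type*} [Monoid S] [Star S] (r : InverseSemigroupRep S X)

/-- The domain `D_{s*s}` of the partial bijection `α s`; for an idempotent `e`,
`r.dom e` is the set `D_e`. -/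
def dom (s : S) : Set X := {x | ((r.α s) x).isSome}

/-- The image `α_s(B)` of a subset `B ⊆ X` under the partial bijection `α s`. -/
def im (s : S) (B : Set X) : Set X := {y | ∃ x ∈ B, (r.α s) x = some y}

/-- `A ⊆ X` is `S`-domain measurable: there is a finitely additive measure on `𝒫(X)`
normalized at `A` and invariant on domains. -/
def SDomainMeasurableSet (A : Set X) : Prop :=
  ∃ μ : Set X → ℝ≥0∞, IsFinAddMeasure μ ∧ μ A = 1 ∧
    ∀ (s : S) (B : Set X), B ⊆ r.dom s → μ (r.im s B) = μ B

/-- `A ⊆ X` is `S`-amenable: there is a finitely additive measure on `𝒫(X)` normalized at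
`A`, invariant on domains, and localized (`μ(B) = μ(B ∩ D_{t*t})` for all `t`). -/
def SAmenableSet (A : Set X) : Prop :=
  ∃ μ : Set X → ℝ≥0∞, IsFinAddMeasure μ ∧ μ A = 1 ∧
    (∀ (s : S) (B : Set X), B ⊆ r.dom s → μ (r.im s B) = μ B) ∧
    (∀ (t : S) (B : Set X), μ B = μ (B ∩ r.dom t))

/-- `A ⊆ X` is `S`-paradoxical: `A` admits two disjoint families of pairwise disjoint
subsets, each contained in the appropriate domain, whose images partition `A` twice. -/
def SParadoxical (A : Set X) : Prop :=
  ∃ (n m : ℕ) (s : Fin n → S) (t : Fin m → S) (As : Fin n → Set X) (Bs : Fin m → Set X),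
    (∀ i, As i ⊆ A) ∧ (∀ j, Bs j ⊆ A) ∧
    (∀ i, As i ⊆ r.dom (s i)) ∧ (∀ j, Bs j ⊆ r.dom (t j)) ∧
    (∀ i j, i ≠ j → Disjoint (As i) (As j)) ∧
    (∀ i j, i ≠ j → Disjoint (Bs i) (Bs j)) ∧
    (∀ i j, Disjoint (As i) (Bs j)) ∧
    (∀ i j, i ≠ j → Disjoint (r.im (s i) (As i)) (r.im (s j) (As j))) ∧
    (∀ i j, i ≠ j → Disjoint (r.im (t i) (Bs i)) (r.im (t j) (Bs j))) ∧
    (⋃ i, r.im (s i) (As i)) = A ∧ (⋃ j, r.im (t j) (Bs j)) = A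

/-- `A ⊆ X` is `S`-domain Følner: there is a sequence of finite non-empty subsets `F n ⊆ A`
with `|α_s(F n ∩ D_{s*s}) \ F n| / |F n| → 0` for every `s ∈ S`. -/
def SDomainFolner (A : Set X) : Prop :=
  ∃ F : ℕ → Finset X, (∀ n, (F n).Nonempty) ∧ (∀ n, (F n : Set X) ⊆ A) ∧
    ∀ s : S, Filter.Tendsto
      (fun n => ((r.im s ((F n : Set X) ∩ r.dom s) \ (F n : Set X)).ncard : ℝ) / (F n).card)
      Filter.atTop (nhds 0)

end InverseSemigroupRep

namespace InverseSemigroupRep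

variable {S X : Type*} [Monoid S] [Star S] (r : InverseSemigroupRep S X)

/-- The action of `S` on real-valued functions on `X`:
`(t·f)(x) = f(α_{t*}(x))` if `x ∈ D_{t t*}` and `0` otherwise. -/
def act (t : S) (f : X → ℝ) (x : X) : ℝ := ((r.α (star t)) x).elim 0 f

end InverseSemigroupRep

open Pointwise

section Aux
variable {S : Type*} [Monoid S] [Star S] [IsInverseSemigroup S]

lemma star_star_eq (s : S) : star (star s) = s :=
  (IsInverseSemigroup.star_unique (star s) s
    (IsInverseSemigroup.star_mul_self_mul_star s)
    (IsInverseSemigroup.mul_star_mul_self s)).symm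

lemma star_idem_eq (s : S) : star (star s * s) = star s * s := by
  have he : (star s * s) * (star s * s) = star s * s := by
    have h := IsInverseSemigroup.mul_star_mul_self s
    calc (star s * s) * (star s * s) = star s * (s * star s * s) := by
          simp [mul_assoc]
      _ = star s * s := by rw [h]
  exact (IsInverseSemigroup.star_unique (star s * s) (star s * s)
    (by rw [he, he]) (by rw [he, he])).symm
end Aux

section SInt
variable {X : Type*} {ν : Set X → ℝ}

/-- finitely additive integral of a simple function -/
noncomputable def sInt (ν : Set X → ℝ) (g : X → ℝ) : ℝ := ∑ᶠ c, c * ν (g ⁻¹' {c})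

variable (hν0 : ν ∅ = 0)
  (hνadd : ∀ A B : Set X, Disjoint A B → ν (A ∪ B) = ν A + ν B)

include hν0 hνadd in
lemma nu_biUnion {ι : Type*} (I : Finset ι) (A : ι → Set X)
    (hd : ∀ i ∈ I, ∀ j ∈ I, i ≠ j → Disjoint (A i) (A j)) :
    ν (⋃ i ∈ I, A i) = ∑ i ∈ I, ν (A i) := by
  classical
  induction I using Finset.induction_on with
  | empty => simpa using hν0
  | @insert a I ha ih =>
    rw [Finset.sum_insert ha, Finset.set_biUnion_insert,
      hνadd _ _ (by
        rw [Set.disjoint_iUnion₂_right]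
        intro i hi
        exact hd a (Finset.mem_insert_self a I) i (Finset.mem_insert_of_mem hi)
          (fun h => ha (h ▸ hi))),
      ih (fun i hi j hj hij =>
        hd i (Finset.mem_insert_of_mem hi) j (Finset.mem_insert_of_mem hj) hij)]

include hν0 hνadd in
lemma sInt_rep {ι : Type*} (I : Finset ι) (A : ι → Set X) (c : ι → ℝ)
    (hd : ∀ i ∈ I, ∀ j ∈ I, i ≠ j → Disjoint (A i) (A j)) :
    sInt ν (fun x => ∑ i ∈ I, (A i).indicator (fun _ => c i) x)
      = ∑ i ∈ I, c i * ν (A i) := by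
  classical
  set g : X → ℝ := fun x => ∑ i ∈ I, (A i).indicator (fun _ => c i) x with hg
  have hgmem : ∀ i ∈ I, ∀ x ∈ A i, g x = c i := by
    intro i hi x hx
    have hz : ∀ j ∈ I, j ≠ i → (A j).indicator (fun _ => c j) x = 0 := fun j hj hji =>
      Set.indicator_of_notMem (fun hxj => (hd j hj i hi hji).ne_of_mem hxj hx rfl) _
    calc g x = (A i).indicator (fun _ => c i) x := Finset.sum_eq_single_of_mem i hi hz
      _ = c i := Set.indicator_of_mem hx _
  have hgnot : ∀ x, (∀ i ∈ I, x ∉ A i) → g x = 0 := by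
    intro x hx
    exact Finset.sum_eq_zero fun i hi => Set.indicator_of_notMem (hx i hi) _
  set F : Finset ℝ := insert 0 (I.image c) with hF
  have hsupp : Function.support (fun d => d * ν (g ⁻¹' {d})) ⊆ ↑F := by
    intro d hdne
    by_contra hdF
    have hd0 : d ≠ 0 := fun h => hdF (h ▸ Finset.mem_insert_self 0 _)
    have hdim : ∀ i ∈ I, c i ≠ d := fun i hi hcd =>
      hdF (Finset.mem_insert_of_mem (Finset.mem_image.mpr ⟨i, hi, hcd⟩))
    have hemp : g ⁻¹' {d} = ∅ := by
      ext x
      simp only [Set.mem_preimage, Set.mem_singleton_iff, Set.mem_empty_iff_false, iff_false]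
      intro hgx
      by_cases hmem : ∃ i ∈ I, x ∈ A i
      · obtain ⟨i, hi, hxi⟩ := hmem
        exact hdim i hi ((hgmem i hi x hxi).symm.trans hgx)
      · push_neg at hmem
        exact hd0 (hgx.symm.trans (hgnot x hmem))
    apply hdne
    simp [hemp, hν0]
  rw [sInt, finsum_eq_sum_of_support_subset _ hsupp]
  have key : ∀ d ∈ F, d * ν (g ⁻¹' {d})
      = ∑ i ∈ I.filter (fun i => c i = d), c i * ν (A i) := by
    intro d _
    by_cases hd0 : d = 0
    · subst hd0
      rw [zero_mul]
      exact (Finset.sum_eq_zero fun i hi => by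
        rw [(Finset.mem_filter.mp hi).2, zero_mul]).symm
    · have hpre : g ⁻¹' {d} = ⋃ i ∈ I.filter (fun i => c i = d), A i := by
        ext x
        simp only [Set.mem_preimage, Set.mem_singleton_iff, Set.mem_iUnion,
          Finset.mem_filter, exists_prop]
        constructor
        · intro hgx
          by_cases hmem : ∃ i ∈ I, x ∈ A i
          · obtain ⟨i, hi, hxi⟩ := hmem
            exact ⟨i, ⟨hi, (hgmem i hi x hxi).symm.trans hgx⟩, hxi⟩
          · push_neg at hmem
            exact absurd ((hgnot x hmem).symm.trans hgx) (Ne.symm hd0)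
        · rintro ⟨i, ⟨hi, hci⟩, hxi⟩
          rw [hgmem i hi x hxi, hci]
      rw [hpre, nu_biUnion hν0 hνadd _ _
        (fun i hi j hj hij =>
          hd i (Finset.mem_filter.mp hi).1 j (Finset.mem_filter.mp hj).1 hij),
        Finset.mul_sum]
      refine Finset.sum_congr rfl fun i hi => ?_
      rw [(Finset.mem_filter.mp hi).2]
  rw [Finset.sum_congr rfl key,
    Finset.sum_fiberwise_of_maps_to
      (fun i hi => Finset.mem_insert_of_mem (Finset.mem_image.mpr ⟨i, hi, rfl⟩))]

include hν0 hνadd in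
lemma sInt_add (g₁ g₂ : X → ℝ) (h₁ : (Set.range g₁).Finite) (h₂ : (Set.range g₂).Finite) :
    sInt ν (fun x => g₁ x + g₂ x) = sInt ν g₁ + sInt ν g₂ := by
  classical
  have hpair : (Set.range fun x => (g₁ x, g₂ x)).Finite :=
    Set.Finite.subset (h₁.prod h₂) (by rintro _ ⟨x, rfl⟩; exact ⟨⟨x, rfl⟩, ⟨x, rfl⟩⟩)
  set I : Finset (ℝ × ℝ) := hpair.toFinset with hI
  set A : ℝ × ℝ → Set X := fun p => (fun x => (g₁ x, g₂ x)) ⁻¹' {p} with hA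
  have hd : ∀ i ∈ I, ∀ j ∈ I, i ≠ j → Disjoint (A i) (A j) := by
    intro i _ j _ hij
    rw [Set.disjoint_left]
    rintro x hxi hxj
    exact hij (hxi.symm.trans hxj)
  have hrep : ∀ cf : ℝ × ℝ → ℝ,
      (fun x => ∑ p ∈ I, (A p).indicator (fun _ => cf p) x) = fun x => cf (g₁ x, g₂ x) := by
    intro cf
    funext x
    have hz : ∀ p ∈ I, p ≠ (g₁ x, g₂ x) → (A p).indicator (fun _ => cf p) x = 0 :=
      fun p _ hp =>
        Set.indicator_of_notMem (s := A p) (fun hxp => hp (Set.mem_singleton_iff.mp hxp).symm) _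
    calc (∑ p ∈ I, (A p).indicator (fun _ => cf p) x)
        = (A (g₁ x, g₂ x)).indicator (fun _ => cf (g₁ x, g₂ x)) x :=
          Finset.sum_eq_single_of_mem _ (hpair.mem_toFinset.mpr ⟨x, rfl⟩) hz
      _ = cf (g₁ x, g₂ x) := Set.indicator_of_mem rfl _
  have e1 := sInt_rep hν0 hνadd I A (fun p => p.1) hd
  have e2 := sInt_rep hν0 hνadd I A (fun p => p.2) hd
  have e3 := sInt_rep hν0 hνadd I A (fun p => p.1 + p.2) hd
  rw [hrep] at e1 e2 e3
  have e1' : sInt ν g₁ = ∑ p ∈ I, p.1 * ν (A p) := e1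
  have e2' : sInt ν g₂ = ∑ p ∈ I, p.2 * ν (A p) := e2
  have e3' : sInt ν (fun x => g₁ x + g₂ x) = ∑ p ∈ I, (p.1 + p.2) * ν (A p) := e3
  rw [e1', e2', e3', ← Finset.sum_add_distrib]
  exact Finset.sum_congr rfl fun p _ => add_mul _ _ _

include hν0 in
lemma sInt_nonneg (hνpos : ∀ A, 0 ≤ ν A) (g : X → ℝ) (hg : ∀ x, 0 ≤ g x) :
    0 ≤ sInt ν g := by
  refine finsum_nonneg fun c => ?_
  rcases le_or_gt 0 c with hc | hc
  · exact mul_nonneg hc (hνpos _)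
  · have hemp : g ⁻¹' {c} = ∅ := by
      ext x
      simp only [Set.mem_preimage, Set.mem_singleton_iff, Set.mem_empty_iff_false, iff_false]
      intro h
      exact absurd (h ▸ hg x) (not_le.mpr hc)
    simp [hemp, hν0]

include hν0 hνadd in
lemma sInt_const (κ : ℝ) : sInt ν (fun _ => κ) = κ * ν Set.univ := by
  classical
  have h := sInt_rep hν0 hνadd ({0} : Finset ℕ) (fun _ => Set.univ) (fun _ => κ)
    (by intro i hi j hj hij; simp at hi hj; exact absurd (hi.trans hj.symm) hij)
  simpa using h

lemma range_sum_finite {ι : Type*} (I : Finset ι) (F : ι → X → ℝ)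
    (hF : ∀ i ∈ I, (Set.range (F i)).Finite) :
    (Set.range fun x => ∑ i ∈ I, F i x).Finite := by
  classical
  induction I using Finset.induction_on with
  | empty =>
    exact Set.Finite.subset (Set.finite_singleton 0) (by rintro _ ⟨x, rfl⟩; simp)
  | @insert a I ha ih =>
    have h1 := hF a (Finset.mem_insert_self a I)
    have h2 := ih (fun i hi => hF i (Finset.mem_insert_of_mem hi))
    refine Set.Finite.subset (h1.image2 (· + ·) h2) ?_
    rintro _ ⟨x, rfl⟩
    simp only [Finset.sum_insert ha]
    exact Set.mem_image2_of_mem ⟨x, rfl⟩ ⟨x, rfl⟩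

include hν0 hνadd in
lemma sInt_sum {ι : Type*} (I : Finset ι) (F : ι → X → ℝ)
    (hF : ∀ i ∈ I, (Set.range (F i)).Finite) :
    sInt ν (fun x => ∑ i ∈ I, F i x) = ∑ i ∈ I, sInt ν (F i) := by
  classical
  induction I using Finset.induction_on with
  | empty =>
    have h := sInt_rep hν0 hνadd (∅ : Finset ℕ) (fun _ => (∅ : Set X)) (fun _ => (0:ℝ))
      (by simp)
    simpa using h
  | @insert a I ha ih =>
    rw [Finset.sum_insert ha,
      show (fun x => ∑ i ∈ insert a I, F i x) = fun x => F a x + ∑ i ∈ I, F i x from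
        funext fun x => by rw [Finset.sum_insert ha],
      sInt_add hν0 hνadd _ _ (hF a (Finset.mem_insert_self a I))
        (range_sum_finite I F fun i hi => hF i (Finset.mem_insert_of_mem hi)),
      ih (fun i hi => hF i (Finset.mem_insert_of_mem hi))]
end SInt

namespace DayAux
open InverseSemigroupRep
variable {S X : Type*} [Monoid S] [Star S] (r : InverseSemigroupRep S X)

open InverseSemigroupRep
variable {S X : Type*} [Monoid S] [Star S] (r : InverseSemigroupRep S X)

/-- symm relation -/
lemma alpha_star_eq_some {s : S} {x w : X} :
    r.α (star s) x = some w ↔ r.α s w = some x := by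
  rw [r.map_star]
  exact (r.α s).eq_some_iff

lemma alpha_e_eq_some {s : S} {x y : X} :
    r.α (star s * s) x = some y ↔ ((r.α s) x).isSome ∧ y = x := by
  have h : r.α (star s * s) = (r.α s).trans (r.α s).symm := by
    rw [r.map_mul, r.map_star]
  rw [h, (r.α s).self_trans_symm]
  rw [PEquiv.ofSet_eq_some_iff]
  constructor
  · rintro ⟨rfl, h1⟩; exact ⟨h1, rfl⟩
  · rintro ⟨h1, rfl⟩; exact ⟨rfl, h1⟩

/-- defect function -/
noncomputable def Tfun (s : S) (h : X → ℝ) (y : X) : ℝ :=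
  ((r.α s) y).elim 0 h - ((r.α (star s * s)) y).elim 0 h

/-- dual defect function -/
noncomputable def Ufun (s : S) (f : X → ℝ) (x : X) : ℝ :=
  ((r.α (star s)) x).elim 0 f - ((r.α (star s * s)) x).elim 0 f

lemma act_eq_Tfun [IsInverseSemigroup S] (s : S) (h : X → ℝ) (y : X) :
    r.act (star s) h y - r.act (star s * s) h y = Tfun r s h y := by
  unfold InverseSemigroupRep.act Tfun
  rw [star_star_eq, star_idem_eq]

/-- transport along τ -/
noncomputable def tau (s : S) (z : X) : X := ((r.α (star s)) z).getD z

lemma Tfun_support (s : S) (h : X → ℝ) :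
    Function.support (Tfun r s h) ⊆
      (tau r s) '' Function.support h ∪ Function.support h := by
  intro y hy
  rw [Function.mem_support] at hy
  unfold Tfun at hy
  by_cases h1 : ((r.α s) y).elim 0 h ≠ 0
  · left
    rcases hz : (r.α s) y with _ | z
    · rw [hz] at h1; simp at h1
    · rw [hz] at h1
      simp only [Option.elim] at h1
      refine ⟨z, h1, ?_⟩
      unfold tau
      rw [(alpha_star_eq_some r).mpr hz]
      rfl
  · right
    push_neg at h1
    rw [h1, zero_sub, neg_ne_zero] at hy
    rcases hw : (r.α (star s * s)) y with _ | w
    · rw [hw] at hy; simp at hy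
    · rw [hw] at hy
      simp only [Option.elim] at hy
      obtain ⟨-, rfl⟩ := (alpha_e_eq_some r).mp hw
      exact hy

lemma Tfun_linear (s : S) (a b : ℝ) (h₁ h₂ : X → ℝ) (y : X) :
    Tfun r s (fun z => a * h₁ z + b * h₂ z) y = a * Tfun r s h₁ y + b * Tfun r s h₂ y := by
  unfold Tfun
  rcases (r.α s) y with _ | z <;> rcases (r.α (star s * s)) y with _ | w <;>
    simp [Option.elim] <;> ring

lemma Ufun_range_finite (s : S) (f : X → ℝ) (hf : (Set.range f).Finite) :
    (Set.range (Ufun r s f)).Finite := by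
  have h1 : (Set.range fun x => ((r.α (star s)) x).elim 0 f).Finite := by
    refine Set.Finite.subset (hf.insert 0) ?_
    rintro _ ⟨x, rfl⟩
    rcases hz : (r.α (star s)) x with _ | z
    · simp [hz]
    · simp only [hz, Option.elim]
      exact Set.mem_insert_of_mem _ ⟨z, rfl⟩
  have h2 : (Set.range fun x => ((r.α (star s * s)) x).elim 0 f).Finite := by
    refine Set.Finite.subset (hf.insert 0) ?_
    rintro _ ⟨x, rfl⟩
    rcases hz : (r.α (star s * s)) x with _ | z
    · simp [hz]
    · simp only [hz, Option.elim]
      exact Set.mem_insert_of_mem _ ⟨z, rfl⟩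
  refine Set.Finite.subset (h1.image2 (· - ·) h2) ?_
  rintro _ ⟨x, rfl⟩
  exact Set.mem_image2_of_mem ⟨x, rfl⟩ ⟨x, rfl⟩
variable [DecidableEq X]

noncomputable def deltaFun (x : X) : X → ℝ := fun y => if y = x then 1 else 0

lemma pairing (s : S) (x : X) (φs : X → ℝ) (B : Finset X)
    (hxB : x ∈ B) (hτB : ∀ w, r.α (star s) x = some w → w ∈ B) :
    ∑ y ∈ B, Tfun r s (deltaFun x) y * φs y = Ufun r s φs x := by
  classical
  have hT : ∀ y, Tfun r s (deltaFun x) y =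
      (if r.α s y = some x then (1:ℝ) else 0) -
      (if r.α (star s * s) y = some x then (1:ℝ) else 0) := by
    intro y
    unfold Tfun
    congr 1
    · rcases hz : (r.α s) y with _ | z
      · simp [hz]
      · simp only [hz, Option.elim, deltaFun]
        by_cases hzx : z = x
        · subst hzx; simp
        · simp [hzx, Option.some_inj, hzx]
    · rcases hz : (r.α (star s * s)) y with _ | z
      · simp [hz]
      · simp only [hz, Option.elim, deltaFun]
        by_cases hzx : z = x
        · subst hzx; simp
        · simp [hzx, Option.some_inj, hzx]
  calc ∑ y ∈ B, Tfun r s (deltaFun x) y * φs y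
      = ∑ y ∈ B, ((if r.α s y = some x then (1:ℝ) else 0) * φs y
          - (if r.α (star s * s) y = some x then (1:ℝ) else 0) * φs y) := by
        refine Finset.sum_congr rfl fun y _ => ?_
        rw [hT y, sub_mul]
    _ = (∑ y ∈ B, (if r.α s y = some x then (1:ℝ) else 0) * φs y)
        - ∑ y ∈ B, (if r.α (star s * s) y = some x then (1:ℝ) else 0) * φs y :=
        Finset.sum_sub_distrib _ _
    _ = Ufun r s φs x := by
        unfold Ufun
        congr 1
        · rcases hw : (r.α (star s)) x with _ | w
          · refine Finset.sum_eq_zero fun y _ => ?_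
            have : ¬ (r.α s y = some x) := fun h =>
              by rw [(alpha_star_eq_some r).mpr h] at hw; cases hw
            simp [this]
          · simp only [Option.elim]
            refine Finset.sum_eq_single_of_mem w (hτB w hw) ?_ |>.trans ?_
            · intro y _ hyw
              have : ¬ (r.α s y = some x) := fun h => by
                rw [(alpha_star_eq_some r).mpr h] at hw
                exact hyw (Option.some_inj.mp hw)
              simp [this]
            · rw [if_pos ((alpha_star_eq_some r).mp hw), one_mul]
        · rcases he : (r.α (star s * s)) x with _ | u
          · refine Finset.sum_eq_zero fun y _ => ?_
            have : ¬ (r.α (star s * s) y = some x) := fun h => by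
              obtain ⟨hsome, rfl⟩ := (alpha_e_eq_some r).mp h
              rw [h] at he; cases he
            simp [this]
          · obtain rfl : u = x := ((alpha_e_eq_some r).mp he).2
            simp only [Option.elim]
            refine Finset.sum_eq_single_of_mem u hxB ?_ |>.trans ?_
            · intro y _ hyu
              have hne : ¬ (r.α (star s * s) y = some u) := fun h =>
                hyu ((alpha_e_eq_some r).mp h).2.symm
              simp [hne]
            · rw [if_pos he, one_mul]

end DayAux

namespace DayAux


lemma separation {E : Type*} [NormedAddCommGroup E] [NormedSpace ℝ E]
    {C : Set E} (hC : Convex ℝ C) (hne : C.Nonempty) {ε : ℝ} (hε : 0 < ε)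
    (hfar : ∀ v ∈ C, ε ≤ ‖v‖) :
    ∃ (f : E →L[ℝ] ℝ) (δ : ℝ), 0 < δ ∧ ∀ v ∈ C, δ ≤ f v := by
  set s := C + Metric.ball (0:E) ε with hs
  have hopen : IsOpen s := IsOpen.add_left Metric.isOpen_ball
  have hconv : Convex ℝ s := hC.add (convex_ball 0 ε)
  have h0 : (0:E) ∉ s := by
    rintro ⟨c, hc, b, hb, hcb⟩
    rw [Metric.mem_ball, dist_zero_right] at hb
    have hc' : c = -b := eq_neg_of_add_eq_zero_left hcb
    have : ‖c‖ < ε := by rw [hc', norm_neg]; exact hb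
    exact absurd (hfar c hc) (not_le.mpr this)
  obtain ⟨f, hf⟩ := geometric_hahn_banach_open_point hconv hopen h0
  have hneg : ∀ c ∈ C, ∀ b : E, ‖b‖ < ε → f c + f b < 0 := by
    intro c hc b hb
    have hmem : c + b ∈ s := ⟨c, hc, b, by rwa [Metric.mem_ball, dist_zero_right], rfl⟩
    have := hf _ hmem
    rwa [map_add, map_zero] at this
  obtain ⟨c₀, hc₀⟩ := hne
  have hfc₀ : f c₀ < 0 := by
    have := hneg c₀ hc₀ 0 (by simpa using hε)
    simpa using this
  have hc₀ne : c₀ ≠ 0 := fun h => by rw [h, map_zero] at hfc₀; exact lt_irrefl _ hfc₀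
  have hcn : 0 < ‖c₀‖ := norm_pos_iff.mpr hc₀ne
  have hcn' : ‖c₀‖ ≠ 0 := hcn.ne'
  set w : E := (ε / (2 * ‖c₀‖)) • (-c₀) with hw
  have hval : ‖w‖ = ε / 2 := by
    rw [hw, norm_smul, norm_neg, Real.norm_eq_abs, abs_of_pos (by positivity)]
    field_simp
  have hnorm : ‖w‖ < ε := by rw [hval]; linarith
  have hfw : 0 < f w := by
    rw [hw, map_smul, smul_eq_mul, map_neg]
    have h2 : 0 < ε / (2 * ‖c₀‖) := by positivity
    exact mul_pos h2 (by linarith)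
  refine ⟨-f, f w, hfw, fun v hv => ?_⟩
  have := hneg v hv w hnorm
  simp only [ContinuousLinearMap.neg_apply]
  linarith



lemma discretize {X : Type*} (φ : X → ℝ) (M : ℝ) (hM : ∀ x, |φ x| ≤ M)
    (N : ℕ) (hN : 0 < N) :
    ∃ φ' : X → ℝ, (Set.range φ').Finite ∧ ∀ x, |φ' x - φ x| ≤ 1 / N := by
  have hNpos : (0:ℝ) < N := by exact_mod_cast hN
  refine ⟨fun x => (⌈φ x * N⌉ : ℤ) / N, ?_, ?_⟩
  · refine Set.Finite.subset (Set.Finite.image (fun k : ℤ => (k:ℝ)/N)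
      (Set.finite_Icc ⌈-(M*N)⌉ ⌈M*N⌉)) ?_
    rintro _ ⟨x, rfl⟩
    refine ⟨⌈φ x * N⌉, ⟨Int.ceil_mono ?_, Int.ceil_mono ?_⟩, rfl⟩
    · have := (abs_le.mp (hM x)).1
      nlinarith [hNpos.le]
    · have := (abs_le.mp (hM x)).2
      nlinarith [hNpos.le]
  · intro x
    set c : ℝ := ((⌈φ x * N⌉ : ℤ) : ℝ) with hc
    have h1 : φ x * N ≤ c := Int.le_ceil _
    have h2 : c < φ x * N + 1 := Int.ceil_lt_add_one _
    have e : c / N - φ x = (c - φ x * N) / N := by field_simp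
    rw [e, abs_div, abs_of_pos hNpos]
    gcongr
    exact abs_le.mpr ⟨by linarith, by linarith⟩


variable {ι : Type*} [DecidableEq ι]

variable {ι : Type*} [DecidableEq ι]

noncomputable instance : Fact ((1:ℝ≥0∞) ≤ 1) := ⟨le_refl _⟩

noncomputable def vsum (G : ι → ℝ) (A : Finset ι) : lp (fun _ : ι => ℝ) 1 :=
  ∑ a ∈ A, lp.single 1 a (G a)

lemma lp_single_add (a : ι) (x y : ℝ) :
    lp.single (E := fun _ : ι => ℝ) 1 a (x + y) =
      lp.single 1 a x + lp.single 1 a y := by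
  refine lp.ext (funext fun j => ?_)
  by_cases h : j = a
  · subst h
    simp [lp.single_apply_self, lp.coeFn_add]
  · simp [lp.single_apply_ne _ _ _ h, lp.coeFn_add]

lemma lp_single_zero (a : ι) :
    lp.single (E := fun _ : ι => ℝ) 1 a (0:ℝ) = 0 := by
  refine lp.ext (funext fun j => ?_)
  by_cases h : j = a
  · subst h; simp [lp.single_apply_self]
  · simp [lp.single_apply_ne _ _ _ h]

lemma vsum_subset (G : ι → ℝ) {A A' : Finset ι}
    (hA : ∀ a, G a ≠ 0 → a ∈ A) (hsub : A ⊆ A') :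
    vsum G A = vsum G A' := by
  refine Finset.sum_subset hsub fun a _ ha => ?_
  have : G a = 0 := by_contra fun h => ha (hA a h)
  rw [this, lp_single_zero]

lemma vsum_norm (G : ι → ℝ) (A : Finset ι) : ‖vsum G A‖ = ∑ a ∈ A, |G a| := by
  have hp : 0 < (1:ℝ≥0∞).toReal := by norm_num
  have := lp.norm_sum_single hp G A
  simpa [vsum, Real.norm_eq_abs] using this

lemma vsum_comb (G₁ G₂ : ι → ℝ) (a b : ℝ) (A : Finset ι) :
    vsum (fun i => a * G₁ i + b * G₂ i) A = a • vsum G₁ A + b • vsum G₂ A := by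
  unfold vsum
  rw [Finset.smul_sum, Finset.smul_sum, ← Finset.sum_add_distrib]
  refine Finset.sum_congr rfl fun i _ => ?_
  rw [lp_single_add]
  congr 1
  · rw [show a * G₁ i = a • G₁ i from rfl, lp.single_smul]
  · rw [show b * G₂ i = b • G₂ i from rfl, lp.single_smul]

lemma feval (f : lp (fun _ : ι => ℝ) 1 →L[ℝ] ℝ) (G : ι → ℝ) (A : Finset ι) :
    f (vsum G A) = ∑ a ∈ A, G a * f (lp.single 1 a 1) := by
  unfold vsum
  rw [map_sum]
  refine Finset.sum_congr rfl fun a _ => ?_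
  have h1 : lp.single (E := fun _ : ι => ℝ) 1 a (G a) = G a • lp.single 1 a (1:ℝ) := by
    rw [← lp.single_smul]
    norm_num
  rw [h1, map_smul, smul_eq_mul]

lemma norm_single_one (a : ι) : ‖lp.single (E := fun _ : ι => ℝ) 1 a (1:ℝ)‖ = 1 := by
  have hp : 0 < (1:ℝ≥0∞).toReal := by norm_num
  have := lp.norm_single (E := fun _ : ι => ℝ) (p := 1) (by norm_num) a (1:ℝ)
  simpa using this


end DayAux

namespace DayAux
open InverseSemigroupRep
variable {S X : Type*} [Monoid S] [Star S] (r : InverseSemigroupRep S X)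

lemma elim_range_finite (o : X → Option X) (φ : X → ℝ) (hφ : (Set.range φ).Finite) :
    (Set.range fun x => (o x).elim 0 φ).Finite := by
  refine Set.Finite.subset (hφ.insert 0) ?_
  rintro _ ⟨x, rfl⟩
  rcases hz : o x with _ | z
  · simp [hz]
  · simp only [hz, Option.elim]
    exact Set.mem_insert_of_mem _ ⟨z, rfl⟩

lemma sInt_Ufun_eq_zero (ν : Set X → ℝ) (hν0 : ν ∅ = 0)
    (hνadd : ∀ A B : Set X, Disjoint A B → ν (A ∪ B) = ν A + ν B)
    (hinv : ∀ (t : S) (B : Set X), B ⊆ r.dom t → ν (r.im t B) = ν B)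
    (s : S) (φ : X → ℝ) (hφ : (Set.range φ).Finite) :
    sInt ν (Ufun r s φ) = 0 := by
  classical
  set R : Finset ℝ := hφ.toFinset with hR
  set U : ℝ → Set X := fun c => {x | ∃ w, r.α (star s) x = some w ∧ φ w = c} with hU
  set V : ℝ → Set X := fun c => {x | ((r.α s) x).isSome ∧ φ x = c} with hV
  have hUdisj : ∀ c ∈ R, ∀ c' ∈ R, c ≠ c' → Disjoint (U c) (U c') := by
    intro c _ c' _ hcc
    rw [Set.disjoint_left]
    rintro x ⟨w, hw, hwc⟩ ⟨w', hw', hwc'⟩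
    rw [hw] at hw'
    exact hcc (hwc ▸ (Option.some_inj.mp hw') ▸ hwc')
  have hVdisj : ∀ c ∈ R, ∀ c' ∈ R, c ≠ c' → Disjoint (V c) (V c') := by
    intro c _ c' _ hcc
    rw [Set.disjoint_left]
    rintro x ⟨_, hc⟩ ⟨_, hc'⟩
    exact hcc (hc ▸ hc')
  have hnuUV : ∀ c, ν (U c) = ν (V c) := by
    intro c
    have hUdom : U c ⊆ r.dom (star s) := by
      rintro x ⟨w, hw, -⟩
      show ((r.α (star s)) x).isSome
      rw [hw]; rfl
    have him : r.im (star s) (U c) = V c := by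
      ext y
      constructor
      · rintro ⟨x, ⟨w, hw, hwc⟩, hxy⟩
        rw [hw] at hxy
        obtain rfl : w = y := Option.some_inj.mp hxy
        exact ⟨by rw [(alpha_star_eq_some r).mp hw]; rfl, hwc⟩
      · rintro ⟨hy, hyc⟩
        obtain ⟨x', hx'⟩ := Option.isSome_iff_exists.mp hy
        have hsx : r.α (star s) x' = some y := (alpha_star_eq_some r).mpr hx'
        exact ⟨x', ⟨y, hsx, hyc⟩, hsx⟩
    rw [← him, hinv (star s) (U c) hUdom]
  have hu : (fun x => ∑ c ∈ R, (U c).indicator (fun _ => c) x)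
      = fun x => ((r.α (star s)) x).elim 0 φ := by
    funext x
    rcases hw : (r.α (star s)) x with _ | w
    · simp only [hw, Option.elim]
      refine Finset.sum_eq_zero fun c _ => Set.indicator_of_notMem ?_ _
      rintro ⟨w', hw', -⟩
      rw [hw] at hw'; cases hw'
    · simp only [hw, Option.elim]
      have hmem : x ∈ U (φ w) := ⟨w, hw, rfl⟩
      have hz : ∀ c ∈ R, c ≠ φ w → (U c).indicator (fun _ => c) x = 0 := by
        intro c _ hc
        refine Set.indicator_of_notMem ?_ _
        rintro ⟨w', hw', hwc⟩
        rw [hw] at hw'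
        obtain rfl := Option.some_inj.mp hw'
        exact hc hwc.symm
      calc (∑ c ∈ R, (U c).indicator (fun _ => c) x)
          = (U (φ w)).indicator (fun _ => φ w) x :=
            Finset.sum_eq_single_of_mem _ (hφ.mem_toFinset.mpr ⟨w, rfl⟩) hz
        _ = φ w := Set.indicator_of_mem hmem _
  have hv : (fun x => ∑ c ∈ R, (V c).indicator (fun _ => -c) x)
      = fun x => ((r.α (star s * s)) x).elim 0 (fun w => -(φ w)) := by
    funext x
    rcases he : (r.α (star s * s)) x with _ | u
    · simp only [he, Option.elim]
      refine Finset.sum_eq_zero fun c _ => Set.indicator_of_notMem ?_ _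
      rintro ⟨hy, -⟩
      rw [(alpha_e_eq_some r).mpr ⟨hy, rfl⟩] at he
      cases he
    · obtain rfl : u = x := ((alpha_e_eq_some r).mp he).2
      have hsome : ((r.α s) u).isSome := ((alpha_e_eq_some r).mp he).1
      simp only [he, Option.elim]
      have hmem : u ∈ V (φ u) := ⟨hsome, rfl⟩
      have hz : ∀ c ∈ R, c ≠ φ u → (V c).indicator (fun _ => -c) u = 0 := by
        intro c _ hc
        exact Set.indicator_of_notMem (fun h => hc h.2.symm) _
      calc (∑ c ∈ R, (V c).indicator (fun _ => -c) u)
          = (V (φ u)).indicator (fun _ => -(φ u)) u :=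
            Finset.sum_eq_single_of_mem _ (hφ.mem_toFinset.mpr ⟨u, rfl⟩) hz
        _ = -(φ u) := Set.indicator_of_mem hmem _
  have hUfun : Ufun r s φ = fun x =>
      ((r.α (star s)) x).elim 0 φ + ((r.α (star s * s)) x).elim 0 (fun w => -(φ w)) := by
    funext x
    unfold Ufun
    rcases he : (r.α (star s * s)) x with _ | u <;> simp [he, sub_eq_add_neg]
  rw [hUfun, sInt_add hν0 hνadd _ _ (elim_range_finite _ φ hφ)
    (elim_range_finite _ _ (hφ.image Neg.neg |>.subset (by rintro _ ⟨x, rfl⟩; exact ⟨φ x, ⟨x, rfl⟩, rfl⟩))),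
    ← hu, ← hv, sInt_rep hν0 hνadd R U _ hUdisj, sInt_rep hν0 hνadd R V _ hVdisj]
  rw [← Finset.sum_add_distrib]
  refine Finset.sum_eq_zero fun c _ => ?_
  rw [hnuUV c]
  ring
end DayAux


/-- If `X` is `S`-domain measurable then for every `ε > 0` and finite `𝓕 ⊆ S` there is a
finitely supported `h : X → [0,∞)` with `∑ₓ h(x) = 1` and
`∑ₓ |(s*·h)(x) − ((s*s)·h)(x)| < ε` for every `s ∈ 𝓕`. -/
theorem statement10 {S X : Type*} [Monoid S] [Star S] [IsInverseSemigroup S] [Countable S]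
    (r : InverseSemigroupRep S X)
    (hX : r.SDomainMeasurableSet (Set.univ : Set X)) :
    ∀ ε : ℝ, 0 < ε → ∀ 𝓕 : Finset S, ∃ h : X → ℝ,
      (Function.support h).Finite ∧ (∀ x, 0 ≤ h x) ∧ (∑ᶠ x, h x) = 1 ∧
      ∀ s ∈ 𝓕, (∑ᶠ x, |r.act (star s) h x - r.act (star s * s) h x|) < ε := by
  classical
  intro ε hε 𝓕
  by_contra hcon
  push_neg at hcon
  open DayAux in
  obtain ⟨μ, ⟨hμ0, hμadd⟩, hμuniv, hμinv⟩ := hX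
  -- basic facts about μ
  have hmono : ∀ A B : Set X, A ⊆ B → μ A ≤ μ B := by
    intro A B hAB
    have h1 := hμadd A (B \ A) Set.disjoint_sdiff_right
    rw [Set.union_diff_cancel hAB] at h1
    rw [h1]
    exact le_self_add
  have hfin : ∀ A : Set X, μ A ≠ ⊤ := by
    intro A
    have h1 : μ A ≤ 1 := hμuniv ▸ hmono A Set.univ (Set.subset_univ A)
    exact (h1.trans_lt ENNReal.one_lt_top).ne
  set ν : Set X → ℝ := fun A => (μ A).toReal with hν
  have hν0 : ν ∅ = 0 := by simp [hν, hμ0]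
  have hνadd : ∀ A B : Set X, Disjoint A B → ν (A ∪ B) = ν A + ν B := by
    intro A B hAB
    simp only [hν]
    rw [hμadd A B hAB, ENNReal.toReal_add (hfin A) (hfin B)]
  have hνuniv : ν Set.univ = 1 := by simp [hν, hμuniv]
  have hνpos : ∀ A, 0 ≤ ν A := fun A => ENNReal.toReal_nonneg
  have hνinv : ∀ (t : S) (B : Set X), B ⊆ r.dom t → ν (r.im t B) = ν B := by
    intro t B hB
    simp only [hν]
    rw [hμinv t B hB]
  -- X is nonempty
  have hXne : Nonempty X := by
    by_contra hne
    rw [not_nonempty_iff] at hne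
    rw [Set.univ_eq_empty_iff.mpr hne, hμ0] at hμuniv
    exact zero_ne_one hμuniv
  obtain ⟨x₀⟩ := hXne
  -- the space and the convex set
  set Pset : Set (X → ℝ) :=
    {h | (Function.support h).Finite ∧ (∀ x, 0 ≤ h x) ∧ ∑ᶠ x, h x = 1} with hPset
  have hconP : ∀ h ∈ Pset, ∃ s ∈ 𝓕, ε ≤ ∑ᶠ y, |Tfun r s h y| := by
    rintro h ⟨h1, h2, h3⟩
    obtain ⟨s, hs, hges⟩ := hcon h h1 h2 h3
    refine ⟨s, hs, le_trans hges (le_of_eq (finsum_congr fun y => ?_))⟩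
    rw [act_eq_Tfun]
  -- support finsets
  set Bset : (X → ℝ) → Finset X := fun h =>
    if hh : (Function.support h).Finite then
      hh.toFinset ∪ 𝓕.attach.biUnion (fun σ => hh.toFinset.image (tau r ↑σ))
    else ∅ with hBset
  have hBsupp : ∀ (h : X → ℝ), (Function.support h).Finite → ∀ σ : {s // s ∈ 𝓕},
      Function.support (Tfun r ↑σ h) ⊆ ↑(Bset h) := by
    intro h hh σ y hy
    have := Tfun_support r ↑σ h hy
    simp only [hBset, dif_pos hh, Finset.coe_union, Set.mem_union]
    rcases this with ⟨z, hz, hzy⟩ | hy'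
    · right
      simp only [Finset.coe_biUnion, Set.mem_iUnion]
      exact ⟨σ, Finset.mem_coe.mpr (Finset.mem_attach _ _), by
        simp only [Finset.coe_image, Set.mem_image]
        exact ⟨z, hh.mem_toFinset.mpr hz, hzy⟩⟩
    · left
      exact hh.mem_toFinset.mpr hy'
  set Gfun : (X → ℝ) → {s // s ∈ 𝓕} × X → ℝ := fun h a => Tfun r ↑a.1 h a.2 with hGfun
  have hGsupp : ∀ (h : X → ℝ), (Function.support h).Finite →
      ∀ a : {s // s ∈ 𝓕} × X, Gfun h a ≠ 0 → a ∈ 𝓕.attach ×ˢ Bset h := by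
    intro h hh a ha
    rw [Finset.mem_product]
    exact ⟨Finset.mem_attach _ _, hBsupp h hh a.1 ha⟩
  set Vmap : (X → ℝ) → lp (fun _ : {s // s ∈ 𝓕} × X => ℝ) 1 := fun h =>
    vsum (Gfun h) (𝓕.attach ×ˢ Bset h) with hVmap
  set Cset : Set (lp (fun _ : {s // s ∈ 𝓕} × X => ℝ) 1) := Vmap '' Pset with hCset
  -- delta functions are in Pset
  have hdelta : ∀ x : X, deltaFun (X := X) x ∈ Pset := by
    intro x
    have hsupp : Function.support (deltaFun (X := X) x) ⊆ {x} := by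
      intro y hy
      rw [Function.mem_support] at hy
      rcases eq_or_ne y x with h | h
      · exact h ▸ rfl
      · exact absurd (if_neg h) hy
    refine ⟨Set.Finite.subset (Set.finite_singleton x) hsupp, ?_, ?_⟩
    · intro y
      unfold deltaFun
      split <;> norm_num
    · rw [finsum_eq_single _ x (fun y hy => by simp [deltaFun, hy])]
      simp [deltaFun]
  have hCne : Cset.Nonempty := ⟨Vmap (deltaFun x₀), Set.mem_image_of_mem _ (hdelta x₀)⟩
  -- convexity
  have hconv : Convex ℝ Cset := by
    rintro v₁ ⟨h₁, hP₁, rfl⟩ v₂ ⟨h₂, hP₂, rfl⟩ a b ha hb hab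
    set h : X → ℝ := fun x => a * h₁ x + b * h₂ x with hdef
    have hsupp : Function.support h ⊆ Function.support h₁ ∪ Function.support h₂ := by
      intro x hx
      rw [Function.mem_support] at hx
      by_contra hmem
      simp only [Set.mem_union, Function.mem_support, not_or, not_not] at hmem
      apply hx
      simp [hdef, hmem.1, hmem.2]
    have hhfin : (Function.support h).Finite :=
      Set.Finite.subset (hP₁.1.union hP₂.1) hsupp
    have hP : h ∈ Pset := by
      refine ⟨hhfin, fun x => add_nonneg (mul_nonneg ha (hP₁.2.1 x))
        (mul_nonneg hb (hP₂.2.1 x)), ?_⟩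
      have hs1 : (Function.support fun x => a * h₁ x).Finite := by
        refine Set.Finite.subset hP₁.1 ?_
        intro x hx
        rw [Function.mem_support] at hx ⊢
        exact fun h => hx (by rw [h, mul_zero])
      have hs2 : (Function.support fun x => b * h₂ x).Finite := by
        refine Set.Finite.subset hP₂.1 ?_
        intro x hx
        rw [Function.mem_support] at hx ⊢
        exact fun h => hx (by rw [h, mul_zero])
      rw [finsum_add_distrib hs1 hs2, ← mul_finsum h₁ a, ← mul_finsum h₂ b,
        hP₁.2.2, hP₂.2.2]
      simpa using hab
    refine ⟨h, hP, ?_⟩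
    set A' : Finset ({s // s ∈ 𝓕} × X) := (𝓕.attach ×ˢ Bset h) ∪
      ((𝓕.attach ×ˢ Bset h₁) ∪ (𝓕.attach ×ˢ Bset h₂)) with hA'
    have e0 : Vmap h = vsum (Gfun h) A' :=
      vsum_subset _ (hGsupp h hhfin) Finset.subset_union_left
    have e1 : Vmap h₁ = vsum (Gfun h₁) A' :=
      vsum_subset _ (hGsupp h₁ hP₁.1)
        (Finset.subset_union_left.trans Finset.subset_union_right)
    have e2 : Vmap h₂ = vsum (Gfun h₂) A' :=
      vsum_subset _ (hGsupp h₂ hP₂.1)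
        (Finset.subset_union_right.trans Finset.subset_union_right)
    have eG : Gfun h = fun i => a * Gfun h₁ i + b * Gfun h₂ i := by
      funext i
      exact Tfun_linear r ↑i.1 a b h₁ h₂ i.2
    rw [e0, e1, e2, eG, vsum_comb]
  -- distance from 0
  have hfar : ∀ v ∈ Cset, ε ≤ ‖v‖ := by
    rintro v ⟨h, hP, rfl⟩
    obtain ⟨s, hs, hges⟩ := hconP h hP
    have habs_supp : Function.support (fun y => |Tfun r s h y|) ⊆ ↑(Bset h) := by
      intro y hy
      rw [Function.mem_support, abs_ne_zero] at hy
      exact hBsupp h hP.1 ⟨s, hs⟩ hy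
    have e1 : ∑ᶠ y, |Tfun r s h y| = ∑ y ∈ Bset h, |Tfun r s h y| :=
      finsum_eq_sum_of_support_subset _ habs_supp
    have e2 : ∑ y ∈ Bset h, |Tfun r s h y|
        = ∑ a ∈ ({⟨s, hs⟩} : Finset {s // s ∈ 𝓕}) ×ˢ Bset h, |Gfun h a| := by
      rw [Finset.sum_product, Finset.sum_singleton]
    have e3 : ∑ a ∈ ({⟨s, hs⟩} : Finset {s // s ∈ 𝓕}) ×ˢ Bset h, |Gfun h a|
        ≤ ∑ a ∈ 𝓕.attach ×ˢ Bset h, |Gfun h a| := by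
      refine Finset.sum_le_sum_of_subset_of_nonneg
        (Finset.product_subset_product_left ?_) (fun _ _ _ => abs_nonneg _)
      intro σ hσ
      exact Finset.mem_attach _ _
    calc ε ≤ ∑ᶠ y, |Tfun r s h y| := hges
      _ ≤ ∑ a ∈ 𝓕.attach ×ˢ Bset h, |Gfun h a| := by rw [e1, e2]; exact e3
      _ = ‖Vmap h‖ := (vsum_norm _ _).symm
  -- separation
  obtain ⟨f, δ, hδ, hfC⟩ := separation hconv hCne hε hfar
  set φ : {s // s ∈ 𝓕} → X → ℝ := fun σ y => f (lp.single 1 (σ, y) 1) with hφ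
  have hφbd : ∀ σ y, |φ σ y| ≤ ‖f‖ := by
    intro σ y
    have h1 := f.le_opNorm (lp.single 1 (σ, y) 1)
    rw [norm_single_one] at h1
    simpa [Real.norm_eq_abs] using h1
  -- pointwise inequality
  have hpoint : ∀ x : X, δ ≤ ∑ σ ∈ 𝓕.attach, Ufun r ↑σ (φ σ) x := by
    intro x
    have hmem : Vmap (deltaFun x) ∈ Cset := Set.mem_image_of_mem _ (hdelta x)
    have h1 : δ ≤ f (Vmap (deltaFun x)) := hfC _ hmem
    have hd := hdelta x
    have h2 : f (Vmap (deltaFun x)) =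
        ∑ a ∈ 𝓕.attach ×ˢ Bset (deltaFun x), Gfun (deltaFun x) a * φ a.1 a.2 := by
      rw [hVmap, feval]
    have h3 : ∑ a ∈ 𝓕.attach ×ˢ Bset (deltaFun x), Gfun (deltaFun x) a * φ a.1 a.2
        = ∑ σ ∈ 𝓕.attach, ∑ y ∈ Bset (deltaFun x), Tfun r ↑σ (deltaFun x) y * φ σ y := by
      rw [Finset.sum_product]
    have hxB : x ∈ Bset (deltaFun x) := by
      simp only [hBset, dif_pos hd.1, Finset.mem_union]
      left
      rw [Set.Finite.mem_toFinset, Function.mem_support]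
      simp [deltaFun]
    have h4 : ∀ σ ∈ 𝓕.attach, ∑ y ∈ Bset (deltaFun x), Tfun r ↑σ (deltaFun x) y * φ σ y
        = Ufun r ↑σ (φ σ) x := by
      intro σ _
      refine pairing r ↑σ x (φ σ) _ hxB ?_
      intro w hw
      simp only [hBset, dif_pos hd.1, Finset.mem_union]
      right
      rw [Finset.mem_biUnion]
      refine ⟨σ, Finset.mem_attach _ _, Finset.mem_image.mpr ⟨x, ?_, ?_⟩⟩
      · rw [Set.Finite.mem_toFinset, Function.mem_support]
        simp [deltaFun]
      · unfold tau
        rw [hw]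
        rfl
    rw [h2, h3, Finset.sum_congr rfl h4] at h1
    exact h1
  -- discretization
  obtain ⟨N, hN⟩ := exists_nat_gt (max 1 (4 * 𝓕.card / δ))
  have hN1 : (1:ℝ) < N := lt_of_le_of_lt (le_max_left _ _) hN
  have hN0 : 0 < N := by exact_mod_cast lt_trans zero_lt_one hN1
  have hNpos : (0:ℝ) < N := by exact_mod_cast hN0
  have hdisc : ∀ σ : {s // s ∈ 𝓕}, ∃ φ' : X → ℝ,
      (Set.range φ').Finite ∧ ∀ y, |φ' y - φ σ y| ≤ 1 / N :=
    fun σ => discretize (φ σ) ‖f‖ (hφbd σ) N hN0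
  choose φhat hφhatfin hφhatclose using hdisc
  have habs2 : ∀ x y : ℝ, |x - y| ≤ |x| + |y| := fun x y => by
    rw [sub_eq_add_neg]
    exact (abs_add_le _ _).trans (by rw [abs_neg])
  have helper : ∀ (o : Option X) (f₁ f₂ : X → ℝ), (∀ z, |f₁ z - f₂ z| ≤ 1 / N) →
      |o.elim 0 f₁ - o.elim 0 f₂| ≤ 1 / N := by
    intro o f₁ f₂ hcl
    cases o with
    | none => simpa using (by positivity : (0:ℝ) ≤ 1 / N)
    | some z => exact hcl z
  have hUdiff : ∀ (σ : {s // s ∈ 𝓕}) (x : X),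
      |Ufun r ↑σ (φhat σ) x - Ufun r ↑σ (φ σ) x| ≤ 2 / N := by
    intro σ x
    have k1 := helper ((r.α (star ↑σ)) x) (φhat σ) (φ σ) (hφhatclose σ)
    have k2 := helper ((r.α (star ↑σ * ↑σ)) x) (φhat σ) (φ σ) (hφhatclose σ)
    have e : Ufun r ↑σ (φhat σ) x - Ufun r ↑σ (φ σ) x =
        (((r.α (star ↑σ)) x).elim 0 (φhat σ) - ((r.α (star ↑σ)) x).elim 0 (φ σ)) -
        (((r.α (star ↑σ * ↑σ)) x).elim 0 (φhat σ) -
          ((r.α (star ↑σ * ↑σ)) x).elim 0 (φ σ)) := by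
      unfold Ufun
      ring
    rw [e]
    calc |_ - _| ≤ _ + _ := habs2 _ _
      _ ≤ 1 / N + 1 / N := add_le_add k1 k2
      _ = 2 / N := by ring
  -- pointwise inequality for the discretized functions
  have hcard : 4 * (𝓕.card : ℝ) < N * δ := by
    have h1 : 4 * (𝓕.card : ℝ) / δ < N := lt_of_le_of_lt (le_max_right _ _) hN
    rw [div_lt_iff₀ hδ] at h1
    linarith
  have hpoint2 : ∀ x : X, δ / 2 ≤ ∑ σ ∈ 𝓕.attach, Ufun r ↑σ (φhat σ) x := by
    intro x
    have h1 : ∀ σ ∈ 𝓕.attach,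
        Ufun r ↑σ (φ σ) x - 2 / N ≤ Ufun r ↑σ (φhat σ) x := by
      intro σ _
      have := (abs_le.mp (hUdiff σ x)).1
      linarith
    have h2 : ∑ σ ∈ 𝓕.attach, (Ufun r ↑σ (φ σ) x - 2 / N)
        ≤ ∑ σ ∈ 𝓕.attach, Ufun r ↑σ (φhat σ) x := Finset.sum_le_sum h1
    rw [Finset.sum_sub_distrib, Finset.sum_const, Finset.card_attach] at h2
    have h3 : (𝓕.card : ℝ) * (2 / N) ≤ δ / 2 := by
      rw [show (𝓕.card : ℝ) * (2 / N) = 2 * 𝓕.card / N from by ring, div_le_iff₀ hNpos]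
      nlinarith
    have h4 := hpoint x
    calc δ / 2 = δ - δ / 2 := by ring
      _ ≤ δ - (𝓕.card : ℝ) * (2 / N) := by linarith
      _ ≤ ∑ σ ∈ 𝓕.attach, Ufun r ↑σ (φ σ) x - (𝓕.card : ℝ) * (2 / N) := by linarith
      _ ≤ ∑ σ ∈ 𝓕.attach, Ufun r ↑σ (φhat σ) x := by
          rw [nsmul_eq_mul] at h2
          linarith
  -- the contradiction via the invariant integral
  set G : X → ℝ := fun x => ∑ σ ∈ 𝓕.attach, Ufun r ↑σ (φhat σ) x with hG
  have hUranges : ∀ σ ∈ 𝓕.attach, (Set.range (Ufun r ↑σ (φhat σ))).Finite :=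
    fun σ _ => Ufun_range_finite r ↑σ (φhat σ) (hφhatfin σ)
  have hzero : sInt ν G = 0 := by
    rw [hG, sInt_sum hν0 hνadd _ _ hUranges]
    refine Finset.sum_eq_zero fun σ _ => ?_
    exact sInt_Ufun_eq_zero r ν hν0 hνadd hνinv ↑σ (φhat σ) (hφhatfin σ)
  have hGrange : (Set.range G).Finite := range_sum_finite _ _ hUranges
  have hGrange2 : (Set.range fun x => G x - δ / 2).Finite := by
    refine Set.Finite.subset (hGrange.image (fun t => t - δ / 2)) ?_
    rintro _ ⟨x, rfl⟩
    exact ⟨G x, ⟨x, rfl⟩, rfl⟩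
  have hsplit : sInt ν G = sInt ν (fun x => G x - δ / 2) + sInt ν (fun _ => δ / 2) := by
    rw [← sInt_add hν0 hνadd _ _ hGrange2
      (Set.finite_singleton (δ / 2) |>.subset (by rintro _ ⟨x, rfl⟩; rfl))]
    congr 1
    funext x
    ring
  have hpos : 0 ≤ sInt ν (fun x => G x - δ / 2) :=
    sInt_nonneg hν0 hνpos _ (fun x => sub_nonneg.mpr (hpoint2 x))
  have hconst : sInt ν (fun _ => δ / 2) = δ / 2 := by
    rw [sInt_const hν0 hνadd, hνuniv, mul_one]
  rw [hzero] at hsplit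
  rw [hconst] at hsplit
  linarith
end

section
/- Let S be a discrete countable inverse semigroup with identity and with a minimal projection e₀ ∈ E(S), and let α be a representation of S on a set X. Then the following are equivalent: (1) X is S-amenable; (2) D_{e₀} is not S-paradoxical; (3) D_{e₀} is S-domain Følner. -/
open scoped ENNReal

namespace InverseSemigroupRep

variable {S X : Type*} [Monoid S] [Star S] (r : InverseSemigroupRep S X)

lemma trans_apply' (f g : X ≃. X) (a : X) : (f.trans g) a = (f a).bind g := rfl

lemma mem_dom {s : S} {x : X} : x ∈ r.dom s ↔ ((r.α s) x).isSome := Iff.rfl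

lemma mem_im {s : S} {B : Set X} {y : X} :
    y ∈ r.im s B ↔ ∃ x ∈ B, (r.α s) x = some y := Iff.rfl

lemma im_mono {s : S} {B C : Set X} (h : B ⊆ C) : r.im s B ⊆ r.im s C := by
  rintro y ⟨x, hx, hxy⟩; exact ⟨x, h hx, hxy⟩

lemma im_union (s : S) (B C : Set X) : r.im s (B ∪ C) = r.im s B ∪ r.im s C := by
  ext y
  constructor
  · rintro ⟨x, hx | hx, hxy⟩
    · exact Or.inl ⟨x, hx, hxy⟩
    · exact Or.inr ⟨x, hx, hxy⟩
  · rintro (⟨x, hx, hxy⟩ | ⟨x, hx, hxy⟩)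
    · exact ⟨x, Or.inl hx, hxy⟩
    · exact ⟨x, Or.inr hx, hxy⟩

lemma im_comp (s t : S) (B : Set X) : r.im (s * t) B = r.im s (r.im t B) := by
  ext y
  simp only [mem_im, r.map_mul, trans_apply', Option.bind_eq_some_iff]
  constructor
  · rintro ⟨x, hx, z, hz, hzy⟩
    exact ⟨z, ⟨x, hx, hz⟩, hzy⟩
  · rintro ⟨z, ⟨x, hx, hz⟩, hzy⟩
    exact ⟨x, hx, z, hz, hzy⟩

lemma im_one (B : Set X) : r.im 1 B = B := by
  ext y
  simp [mem_im, r.map_one]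

lemma alpha_inj {s : S} {x x' y : X} (h : (r.α s) x = some y) (h' : (r.α s) x' = some y) :
    x = x' := by
  have h1 : (r.α s).symm y = some x := (r.α s).eq_some_iff.2 h
  have h2 : (r.α s).symm y = some x' := (r.α s).eq_some_iff.2 h'
  rw [h1] at h2
  exact Option.some_injective _ h2

lemma im_star_im {s : S} {B : Set X} (h : B ⊆ r.dom s) :
    r.im (star s) (r.im s B) = B := by
  ext x'
  simp only [mem_im, r.map_star]
  constructor
  · rintro ⟨z, ⟨x, hx, hxz⟩, hzx'⟩
    have : (r.α s).symm z = some x := (r.α s).eq_some_iff.2 hxz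
    rw [this] at hzx'
    have := Option.some_injective _ hzx'
    rwa [← this]
  · intro hx
    obtain ⟨z, hz⟩ := Option.isSome_iff_exists.1 (h hx)
    exact ⟨z, ⟨x', hx, hz⟩, (r.α s).eq_some_iff.2 hz⟩

lemma im_disjoint {s : S} {B C : Set X} (hB : B ⊆ r.dom s) (hC : C ⊆ r.dom s)
    (h : Disjoint B C) : Disjoint (r.im s B) (r.im s C) := by
  rw [Set.disjoint_left]
  rintro y ⟨x, hx, hxy⟩ ⟨x', hx', hx'y⟩
  rw [Set.disjoint_left] at h
  exact h hx (by rwa [r.alpha_inj hxy hx'y])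

lemma im_finite {s : S} {B : Set X} (hB : B.Finite) : (r.im s B).Finite := by
  apply Set.Finite.subset (hB.image (fun x => ((r.α s) x).getD x))
  rintro y ⟨x, hx, hxy⟩
  exact ⟨x, hx, by show ((r.α s) x).getD x = y; rw [hxy]; rfl⟩

lemma im_eq_image {s : S} {B : Set X} (h : B ⊆ r.dom s) :
    r.im s B = (fun x => ((r.α s) x).getD x) '' B := by
  ext y
  constructor
  · rintro ⟨x, hx, hxy⟩
    exact ⟨x, hx, by show ((r.α s) x).getD x = y; rw [hxy]; rfl⟩
  · rintro ⟨x, hx, hxy⟩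
    obtain ⟨z, hz⟩ := Option.isSome_iff_exists.1 (h hx)
    refine ⟨x, hx, ?_⟩
    replace hxy : ((r.α s) x).getD x = y := hxy
    rw [hz]; rw [hz] at hxy; simpa using hxy

lemma im_ncard {s : S} {B : Set X} (hB : B.Finite) (h : B ⊆ r.dom s) :
    (r.im s B).ncard = B.ncard := by
  rw [r.im_eq_image h]
  apply Set.ncard_image_of_injOn
  intro x hx x' hx' hxy
  obtain ⟨z, hz⟩ := Option.isSome_iff_exists.1 (h hx)
  obtain ⟨z', hz'⟩ := Option.isSome_iff_exists.1 (h hx')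
  simp only [hz, hz', Option.getD_some] at hxy
  subst hxy
  exact r.alpha_inj hz hz'

section Minimal

variable {e₀ : S}

lemma Y_sub_dom (hmin : ∀ f : S, (∃ s : S, f = star s * s) → e₀ * f = e₀) (s : S) : r.dom e₀ ⊆ r.dom s := by
  intro x hx
  have h := hmin (star s * s) ⟨s, rfl⟩
  have : r.α e₀ = ((r.α s).trans (r.α s).symm).trans (r.α e₀) := by
    conv_lhs => rw [← h]
    rw [r.map_mul, r.map_mul, r.map_star]
  rw [mem_dom, this, trans_apply', trans_apply'] at hx
  rw [mem_dom]
  rcases hos : (r.α s) x with _ | z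
  · rw [hos] at hx; simp at hx
  · simp

lemma mem_Y_of_alpha (hmin : ∀ f : S, (∃ s : S, f = star s * s) → e₀ * f = e₀) {s : S} {x y : X} (hx : x ∈ r.dom e₀) (h : (r.α s) x = some y) :
    y ∈ r.dom e₀ := by
  have hm := hmin (star (e₀ * s) * (e₀ * s)) ⟨e₀ * s, rfl⟩
  have : r.α e₀ = ((r.α (e₀ * s)).trans (r.α (e₀ * s)).symm).trans (r.α e₀) := by
    conv_lhs => rw [← hm]
    rw [r.map_mul, r.map_mul, r.map_star]
  rw [mem_dom, this, trans_apply', trans_apply'] at hx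
  rw [r.map_mul, trans_apply', h] at hx
  simp only [Option.bind_some] at hx
  rw [mem_dom]
  rcases he : (r.α e₀) y with _ | z
  · rw [he] at hx; simp at hx
  · simp

lemma im_sub_Y (hmin : ∀ f : S, (∃ s : S, f = star s * s) → e₀ * f = e₀) {s : S} {B : Set X} (h : B ⊆ r.dom e₀) : r.im s B ⊆ r.dom e₀ := by
  rintro y ⟨x, hx, hxy⟩
  exact r.mem_Y_of_alpha hmin (h hx) hxy

lemma im_inter_Y (hmin : ∀ f : S, (∃ s : S, f = star s * s) → e₀ * f = e₀) (s : S) (B : Set X) :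
    r.im s B ∩ r.dom e₀ = r.im s (B ∩ r.dom e₀) := by
  ext y
  constructor
  · rintro ⟨⟨x, hx, hxy⟩, hy⟩
    have hx' : x ∈ r.dom e₀ := by
      have : (r.α (star s)) y = some x := by
        rw [r.map_star]; exact (r.α s).eq_some_iff.2 hxy
      exact r.mem_Y_of_alpha hmin hy this
    exact ⟨x, ⟨hx, hx'⟩, hxy⟩
  · rintro ⟨x, ⟨hx, hx'⟩, hxy⟩
    exact ⟨⟨x, hx, hxy⟩, r.mem_Y_of_alpha hmin hx' hxy⟩

end Minimal

end InverseSemigroupRep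

namespace InverseSemigroupRep

variable {S X : Type*} [Monoid S] [Star S] (r : InverseSemigroupRep S X) {e₀ : S}

lemma amenable_of_folner (hmin : ∀ f : S, (∃ s : S, f = star s * s) → e₀ * f = e₀)
    (hF : r.SDomainFolner (r.dom e₀)) : r.SAmenableSet (Set.univ : Set X) := by
  classical
  obtain ⟨F, hne, hsub, hfol⟩ := hF
  have hcardpos : ∀ n, (0:ℝ) < (F n).card := by
    intro n; exact_mod_cast Finset.card_pos.2 (hne n)
  set c : Set X → ℕ → ℝ := fun B n => ((B ∩ (F n : Set X)).ncard : ℝ) / (F n).card with hc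
  have hc_mem : ∀ B n, c B n ∈ Set.Icc (0:ℝ) 1 := by
    intro B n
    constructor
    · positivity
    · rw [div_le_one (hcardpos n)]
      have : (B ∩ (F n : Set X)).ncard ≤ (F n).card := by
        rw [← Set.ncard_coe_finset]
        exact Set.ncard_le_ncard Set.inter_subset_right (F n).finite_toSet
      exact_mod_cast this
  set U : Ultrafilter ℕ := Ultrafilter.of Filter.atTop with hU
  have hUle : (U : Filter ℕ) ≤ Filter.atTop := Ultrafilter.of_le _
  have hlim : ∀ B : Set X, ∃ l ∈ Set.Icc (0:ℝ) 1, Filter.Tendsto (c B) U (nhds l) := by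
    intro B
    have hprin : (U.map (c B) : Filter ℝ) ≤ Filter.principal (Set.Icc 0 1) := by
      rw [Filter.le_principal_iff]
      exact Filter.mem_map.2 (Filter.univ_mem' fun n => hc_mem B n)
    obtain ⟨l, hl, hle⟩ := (isCompact_Icc (a := (0:ℝ)) (b := 1)).ultrafilter_le_nhds
      (U.map (c B)) hprin
    exact ⟨l, hl, hle⟩
  choose L hL hLt using hlim
  have huniq : ∀ (B : Set X) (l : ℝ), Filter.Tendsto (c B) U (nhds l) → L B = l := by
    intro B l hl
    exact tendsto_nhds_unique (hLt B) hl
  refine ⟨fun B => ENNReal.ofReal (L B), ⟨?_, ?_⟩, ?_, ?_, ?_⟩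
  · -- μ ∅ = 0
    have : L (∅ : Set X) = 0 := huniq _ _ (by
      have : c (∅ : Set X) = fun _ => (0:ℝ) := by
        funext n; simp [hc]
      rw [this]; exact tendsto_const_nhds)
    simp [this]
  · -- additivity
    intro A B hAB
    have hadd : ∀ n, c (A ∪ B) n = c A n + c B n := by
      intro n
      have hdisj : Disjoint (A ∩ (F n : Set X)) (B ∩ (F n : Set X)) :=
        hAB.mono Set.inter_subset_left Set.inter_subset_left
      have h1 : (A ∪ B) ∩ (F n : Set X) = (A ∩ (F n : Set X)) ∪ (B ∩ (F n : Set X)) :=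
        Set.union_inter_distrib_right A B _
      have h2 : ((A ∪ B) ∩ (F n : Set X)).ncard
          = (A ∩ (F n : Set X)).ncard + (B ∩ (F n : Set X)).ncard := by
        rw [h1]
        exact Set.ncard_union_eq hdisj ((F n).finite_toSet.inter_of_right A)
          ((F n).finite_toSet.inter_of_right B)
      simp only [hc]
      rw [h2]
      push_cast
      ring
    have : Filter.Tendsto (c (A ∪ B)) U (nhds (L A + L B)) := by
      have := (hLt A).add (hLt B)
      refine this.congr fun n => (hadd n).symm
    show ENNReal.ofReal (L (A ∪ B)) = ENNReal.ofReal (L A) + ENNReal.ofReal (L B)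
    rw [huniq _ _ this, ENNReal.ofReal_add (hL A).1 (hL B).1]
  · -- μ univ = 1
    have : L (Set.univ : Set X) = 1 := huniq _ _ (by
      have : c (Set.univ : Set X) = fun _ => (1:ℝ) := by
        funext n
        simp only [hc, Set.univ_inter, Set.ncard_coe_finset]
        rw [div_self (hcardpos n).ne']
      rw [this]; exact tendsto_const_nhds)
    simp [this]
  · -- invariance
    intro s B hBdom
    set C := B ∩ r.dom e₀ with hCdef
    have hCY : C ⊆ r.dom e₀ := Set.inter_subset_right
    have hCdom : C ⊆ r.dom s := fun x hx => hBdom hx.1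
    have hFnY : ∀ n, (F n : Set X) ⊆ r.dom e₀ := hsub
    have hFdom : ∀ (t : S) (n : ℕ), (F n : Set X) ⊆ r.dom t := fun t n =>
      (hFnY n).trans (r.Y_sub_dom hmin t)
    -- counts agree with C-version
    have hcB : ∀ n, c B n = c C n := by
      intro n
      have : B ∩ (F n : Set X) = C ∩ (F n : Set X) := by
        ext x; constructor
        · rintro ⟨h1, h2⟩; exact ⟨⟨h1, hFnY n h2⟩, h2⟩
        · rintro ⟨h1, h2⟩; exact ⟨h1.1, h2⟩
      simp only [hc, this]
    have hcim : ∀ n, c (r.im s B) n = c (r.im s C) n := by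
      intro n
      have : r.im s B ∩ (F n : Set X) = r.im s C ∩ (F n : Set X) := by
        ext y; constructor
        · rintro ⟨h1, h2⟩
          have : y ∈ r.im s B ∩ r.dom e₀ := ⟨h1, hFnY n h2⟩
          rw [r.im_inter_Y hmin] at this
          exact ⟨this, h2⟩
        · rintro ⟨h1, h2⟩
          exact ⟨r.im_mono Set.inter_subset_left h1, h2⟩
      simp only [hc, this]
    -- the two error terms
    set d : ℕ → ℝ := fun n => ((r.im s (F n : Set X) \ (F n : Set X)).ncard : ℝ) / (F n).card with hd
    set d' : ℕ → ℝ := fun n => ((r.im (star s) (F n : Set X) \ (F n : Set X)).ncard : ℝ) / (F n).card with hd'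
    have hdtend : Filter.Tendsto d Filter.atTop (nhds 0) := by
      have := hfol s
      refine this.congr fun n => ?_
      rw [Set.inter_eq_left.2 (hFdom s n)]
    have hd'tend : Filter.Tendsto d' Filter.atTop (nhds 0) := by
      have := hfol (star s)
      refine this.congr fun n => ?_
      rw [Set.inter_eq_left.2 (hFdom (star s) n)]
    -- |c (im s C) n - c C n| ≤ d n + d' n
    have hbound : ∀ n, |c (r.im s C) n - c C n| ≤ d n + d' n := by
      intro n
      have hFfin := (F n).finite_toSet
      have hCFfin : (C ∩ (F n : Set X)).Finite := hFfin.inter_of_right C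
      have himCFfin : (r.im s C ∩ (F n : Set X)).Finite := hFfin.inter_of_right _
      have hineq1 : (C ∩ (F n : Set X)).ncard
          ≤ (r.im s C ∩ (F n : Set X)).ncard + (r.im s (F n : Set X) \ (F n : Set X)).ncard := by
        have hsubs : r.im s (C ∩ (F n : Set X))
            ⊆ (r.im s C ∩ (F n : Set X)) ∪ (r.im s (F n : Set X) \ (F n : Set X)) := by
          rintro y ⟨x, ⟨hxC, hxF⟩, hxy⟩
          by_cases hyF : y ∈ (F n : Set X)
          · exact Or.inl ⟨⟨x, hxC, hxy⟩, hyF⟩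
          · exact Or.inr ⟨⟨x, hxF, hxy⟩, hyF⟩
        calc (C ∩ (F n : Set X)).ncard
            = (r.im s (C ∩ (F n : Set X))).ncard :=
              (r.im_ncard hCFfin (fun x hx => hCdom hx.1)).symm
          _ ≤ ((r.im s C ∩ (F n : Set X)) ∪ (r.im s (F n : Set X) \ (F n : Set X))).ncard :=
              Set.ncard_le_ncard hsubs (Set.Finite.union himCFfin
                ((r.im_finite hFfin).subset Set.diff_subset))
          _ ≤ _ := Set.ncard_union_le _ _
      have hineq2 : (r.im s C ∩ (F n : Set X)).ncard
          ≤ (C ∩ (F n : Set X)).ncard + (r.im (star s) (F n : Set X) \ (F n : Set X)).ncard := by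
        set D := r.im s C ∩ (F n : Set X) with hD
        have hDdom : D ⊆ r.dom (star s) := fun y hy =>
          ((hFnY n).trans (r.Y_sub_dom hmin (star s))) hy.2
        have hsubs : r.im (star s) D
            ⊆ (C ∩ (F n : Set X)) ∪ (r.im (star s) (F n : Set X) \ (F n : Set X)) := by
          intro x hx
          have hxC : x ∈ C := by
            have h1 : r.im (star s) D ⊆ r.im (star s) (r.im s C) :=
              r.im_mono Set.inter_subset_left
            have h2 := r.im_star_im hCdom
            rw [← h2]; exact h1 hx
          have hxF : x ∈ r.im (star s) (F n : Set X) :=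
            r.im_mono Set.inter_subset_right hx
          by_cases hxFn : x ∈ (F n : Set X)
          · exact Or.inl ⟨hxC, hxFn⟩
          · exact Or.inr ⟨hxF, hxFn⟩
        calc D.ncard = (r.im (star s) D).ncard := (r.im_ncard himCFfin hDdom).symm
          _ ≤ ((C ∩ (F n : Set X)) ∪ (r.im (star s) (F n : Set X) \ (F n : Set X))).ncard :=
              Set.ncard_le_ncard hsubs (Set.Finite.union hCFfin
                ((r.im_finite hFfin).subset Set.diff_subset))
          _ ≤ _ := Set.ncard_union_le _ _
      rw [abs_sub_le_iff]
      constructor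
      · have : c (r.im s C) n ≤ c C n + d' n := by
          simp only [hc, hd', ← add_div, div_le_div_iff_of_pos_right (hcardpos n)]
          exact_mod_cast hineq2
        linarith [div_nonneg (Nat.cast_nonneg ((r.im s (F n:Set X) \ (F n:Set X)).ncard)) (hcardpos n).le]
      · have : c C n ≤ c (r.im s C) n + d n := by
          simp only [hc, hd, ← add_div, div_le_div_iff_of_pos_right (hcardpos n)]
          exact_mod_cast hineq1
        linarith [div_nonneg (Nat.cast_nonneg ((r.im (star s) (F n:Set X) \ (F n:Set X)).ncard)) (hcardpos n).le]
    have hdiff : Filter.Tendsto (fun n => c (r.im s C) n - c C n) Filter.atTop (nhds 0) := by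
      apply squeeze_zero_norm hbound
      simpa using hdtend.add hd'tend
    have htendim : Filter.Tendsto (c (r.im s C)) U (nhds (L C)) := by
      have h1 : Filter.Tendsto (fun n => c C n + (c (r.im s C) n - c C n)) U (nhds (L C + 0)) :=
        (hLt C).add (hdiff.mono_left hUle)
      simpa using h1.congr fun n => by ring
    have hLim : L (r.im s B) = L C := by
      apply huniq
      exact htendim.congr fun n => (hcim n).symm
    have hLB : L B = L C := by
      apply huniq
      exact (hLt C).congr fun n => (hcB n).symm
    show ENNReal.ofReal (L (r.im s B)) = ENNReal.ofReal (L B)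
    rw [hLim, hLB]
  · -- localization
    intro t B
    have heq : ∀ n, c B n = c (B ∩ r.dom t) n := by
      intro n
      have : B ∩ (F n : Set X) = (B ∩ r.dom t) ∩ (F n : Set X) := by
        ext x; constructor
        · rintro ⟨h1, h2⟩
          exact ⟨⟨h1, (r.Y_sub_dom hmin t) (hsub n h2)⟩, h2⟩
        · rintro ⟨h1, h2⟩; exact ⟨h1.1, h2⟩
      simp only [hc, this]
    have : L B = L (B ∩ r.dom t) := huniq _ _ ((hLt (B ∩ r.dom t)).congr fun n => (heq n).symm)
    show ENNReal.ofReal (L B) = ENNReal.ofReal (L (B ∩ r.dom t))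
    rw [this]

end InverseSemigroupRep

namespace InverseSemigroupRep

variable {S X : Type*} [Monoid S] [Star S] (r : InverseSemigroupRep S X) {e₀ : S}

lemma finaddmeasure_iUnion {μ : Set X → ℝ≥0∞} (hμ : IsFinAddMeasure μ) :
    ∀ (n : ℕ) (C : Fin n → Set X), (∀ i j, i ≠ j → Disjoint (C i) (C j)) →
      μ (⋃ i, C i) = ∑ i, μ (C i) := by
  intro n
  induction n with
  | zero => intro C _; simp [Set.iUnion_of_empty, hμ.1]
  | succ n ih =>
    intro C hdis
    have hun : (⋃ i, C i) = (⋃ i : Fin n, C i.castSucc) ∪ C (Fin.last n) := by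
      ext x
      simp only [Set.mem_iUnion, Set.mem_union]
      constructor
      · rintro ⟨i, hi⟩
        rcases Fin.lastCases (motive := fun i => x ∈ C i → (∃ j : Fin n, x ∈ C j.castSucc) ∨ x ∈ C (Fin.last n))
          (fun h => Or.inr h) (fun j h => Or.inl ⟨j, h⟩) i hi with h | h
        · exact Or.inl h
        · exact Or.inr h
      · rintro (⟨i, hi⟩ | h)
        · exact ⟨i.castSucc, hi⟩
        · exact ⟨Fin.last n, h⟩
    have hdisj : Disjoint (⋃ i : Fin n, C i.castSucc) (C (Fin.last n)) := by
      rw [Set.disjoint_iUnion_left]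
      intro i
      exact hdis _ _ (Fin.ne_last_of_lt i.castSucc_lt_last)
    rw [hun, hμ.2 _ _ hdisj, ih (fun i => C i.castSucc)
      (fun i j hij => hdis _ _ (by simpa using hij)), Fin.sum_univ_castSucc]

lemma finaddmeasure_mono {μ : Set X → ℝ≥0∞} (hμ : IsFinAddMeasure μ) {A B : Set X}
    (h : A ⊆ B) : μ A ≤ μ B := by
  have : B = A ∪ (B \ A) := by rw [Set.union_diff_cancel h]
  rw [this, hμ.2 _ _ Set.disjoint_sdiff_right]
  exact le_self_add

lemma not_paradoxical_of_amenable (hA : r.SAmenableSet (Set.univ : Set X)) :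
    ¬ r.SParadoxical (r.dom e₀) := by
  rintro ⟨n, m, s, t, As, Bs, hAsub, hBsub, hAdom, hBdom, hAdis, hBdis, hABdis,
    hAimdis, hBimdis, hAun, hBun⟩
  obtain ⟨μ, hμ, h1, hinv, hloc⟩ := hA
  have hY : μ (r.dom e₀) = 1 := by
    have := hloc e₀ Set.univ
    rw [Set.univ_inter] at this
    rw [← this, h1]
  have hsumA : ∑ i, μ (As i) = 1 := by
    have h2 : ∑ i, μ (As i) = ∑ i, μ (r.im (s i) (As i)) := by
      exact Finset.sum_congr rfl fun i _ => (hinv (s i) (As i) (hAdom i)).symm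
    rw [h2, ← finaddmeasure_iUnion hμ n _ hAimdis, hAun, hY]
  have hsumB : ∑ j, μ (Bs j) = 1 := by
    have h2 : ∑ j, μ (Bs j) = ∑ j, μ (r.im (t j) (Bs j)) := by
      exact Finset.sum_congr rfl fun j _ => (hinv (t j) (Bs j) (hBdom j)).symm
    rw [h2, ← finaddmeasure_iUnion hμ m _ hBimdis, hBun, hY]
  set D : Fin (n + m) → Set X := Fin.append As Bs with hD
  have hDdis : ∀ i j, i ≠ j → Disjoint (D i) (D j) := by
    intro i j hij
    refine Fin.addCases (motive := fun i => i ≠ j → Disjoint (D i) (D j)) ?_ ?_ i hij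
    · intro i' hij'
      refine Fin.addCases (motive := fun j => Fin.castAdd m i' ≠ j → Disjoint (D (Fin.castAdd m i')) (D j)) ?_ ?_ j hij'
      · intro j' hne
        simp only [hD, Fin.append_left]
        exact hAdis i' j' (fun h => hne (by rw [h]))
      · intro j' _
        simp only [hD, Fin.append_left, Fin.append_right]
        exact hABdis i' j'
    · intro i' hij'
      refine Fin.addCases (motive := fun j => Fin.natAdd n i' ≠ j → Disjoint (D (Fin.natAdd n i')) (D j)) ?_ ?_ j hij'
      · intro j' _
        simp only [hD, Fin.append_left, Fin.append_right]
        exact (hABdis j' i').symm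
      · intro j' hne
        simp only [hD, Fin.append_right]
        exact hBdis i' j' (fun h => hne (by rw [h]))
  have hDsub : (⋃ i, D i) ⊆ r.dom e₀ := by
    rintro x ⟨U, ⟨i, rfl⟩, hx⟩
    refine Fin.addCases (motive := fun i => x ∈ D i → x ∈ r.dom e₀) ?_ ?_ i hx
    · intro i' hx'; simp only [hD, Fin.append_left] at hx'; exact hAsub i' hx'
    · intro j' hx'; simp only [hD, Fin.append_right] at hx'; exact hBsub j' hx'
  have hDsum : μ (⋃ i, D i) = 2 := by
    rw [finaddmeasure_iUnion hμ _ _ hDdis, Fin.sum_univ_add]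
    simp only [hD, Fin.append_left, Fin.append_right]
    rw [hsumA, hsumB]
    norm_num
  have : (2 : ℝ≥0∞) ≤ 1 := by
    rw [← hDsum, ← hY]
    exact finaddmeasure_mono hμ hDsub
  norm_num at this

end InverseSemigroupRep

namespace InverseSemigroupRep

variable {S X : Type*} [Monoid S] [Star S] (r : InverseSemigroupRep S X) {e₀ : S}

lemma exists_expander [Countable S]
    (hmin : ∀ f : S, (∃ s : S, f = star s * s) → e₀ * f = e₀)
    (hnF : ¬ r.SDomainFolner (r.dom e₀)) :
    ∃ (K : Finset S) (ε : ℝ), 0 < ε ∧ ∀ F : Finset X, F.Nonempty → (F : Set X) ⊆ r.dom e₀ →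
      ∃ s ∈ K, ε * F.card < ((r.im s (F : Set X) \ (F : Set X)).ncard : ℝ) := by
  classical
  by_contra hcon
  push_neg at hcon
  apply hnF
  have hSne : Nonempty S := ⟨1⟩
  obtain ⟨φ, hφ⟩ := exists_surjective_nat S
  have hchoice : ∀ n : ℕ, ∃ F : Finset X, F.Nonempty ∧ (F : Set X) ⊆ r.dom e₀ ∧
      ∀ s ∈ (Finset.range (n+1)).image φ,
        ((r.im s (F : Set X) \ (F : Set X)).ncard : ℝ) ≤ (1/((n:ℝ)+1)) * F.card := by
    intro n
    obtain ⟨F, h1, h2, h3⟩ := hcon ((Finset.range (n+1)).image φ) (1/((n:ℝ)+1)) (by positivity)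
    exact ⟨F, h1, h2, h3⟩
  choose F hne hsub hbound using hchoice
  refine ⟨F, hne, hsub, ?_⟩
  intro s
  obtain ⟨k, rfl⟩ := hφ s
  have hcardpos : ∀ n, (0:ℝ) < (F n).card := by
    intro n; exact_mod_cast Finset.card_pos.2 (hne n)
  apply squeeze_zero' (Filter.Eventually.of_forall fun n => by positivity)
    ?_ tendsto_one_div_add_atTop_nhds_zero_nat
  filter_upwards [Filter.eventually_ge_atTop k] with n hkn
  have hmem : φ k ∈ (Finset.range (n+1)).image φ :=
    Finset.mem_image_of_mem φ (Finset.mem_range.2 (Nat.lt_succ_of_le hkn))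
  have hb := hbound n (φ k) hmem
  have hint : (F n : Set X) ∩ r.dom (φ k) = (F n : Set X) :=
    Set.inter_eq_left.2 ((hsub n).trans (r.Y_sub_dom hmin (φ k)))
  rw [hint, div_le_iff₀ (hcardpos n)]
  calc ((r.im (φ k) (F n : Set X) \ (F n : Set X)).ncard : ℝ)
      ≤ (1/((n:ℝ)+1)) * (F n).card := hb
    _ = 1 / ((n:ℝ)+1) * (F n).card := by ring

end InverseSemigroupRep

namespace InverseSemigroupRep

variable {S X : Type*} [Monoid S] [Star S] (r : InverseSemigroupRep S X) {e₀ : S}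

lemma paradoxical_of_not_folner [Countable S]
    (hmin : ∀ f : S, (∃ s : S, f = star s * s) → e₀ * f = e₀)
    (hnF : ¬ r.SDomainFolner (r.dom e₀)) : r.SParadoxical (r.dom e₀) := by
  classical
  obtain ⟨K, ε, hε, hexp⟩ := r.exists_expander hmin hnF
  set Y := r.dom e₀ with hY
  -- Finset-level image
  set imF : S → Finset X → Finset X := fun s F => F.image (fun x => ((r.α s) x).getD x)
    with himF
  have himF_coe : ∀ (s : S) (F : Finset X), (F : Set X) ⊆ r.dom s →
      ((imF s F : Finset X) : Set X) = r.im s (F : Set X) := by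
    intro s F h
    simp only [himF, Finset.coe_image]
    exact (r.im_eq_image h).symm
  -- the expansion map
  set E : Finset X → Finset X := fun F => F ∪ K.sup (fun s => imF s F) with hE
  have hFsubE : ∀ F, F ⊆ E F := fun F => Finset.subset_union_left
  have hEY : ∀ F : Finset X, (F : Set X) ⊆ Y → ((E F : Finset X) : Set X) ⊆ Y := by
    intro F hF x hx
    simp only [hE, Finset.coe_union, Set.mem_union, Finset.mem_coe, Finset.mem_sup] at hx
    rcases hx with hx | ⟨s, _, hx⟩
    · exact hF hx
    · have hdom : (F : Set X) ⊆ r.dom s := hF.trans (r.Y_sub_dom hmin s)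
      have : x ∈ r.im s (F : Set X) := by rw [← himF_coe s F hdom]; exact hx
      exact r.im_sub_Y hmin hF this
  have hgrow : ∀ F : Finset X, F.Nonempty → (F : Set X) ⊆ Y →
      (1+ε) * F.card ≤ ((E F).card : ℝ) := by
    intro F hne hsub
    obtain ⟨s, hsK, hlt⟩ := hexp F hne hsub
    have hdom : (F : Set X) ⊆ r.dom s := hsub.trans (r.Y_sub_dom hmin s)
    have hsubE : F ∪ (imF s F \ F) ⊆ E F := by
      apply Finset.union_subset (hFsubE F)
      intro x hx
      rw [Finset.mem_sdiff] at hx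
      exact Finset.mem_union_right _ (Finset.mem_sup.2 ⟨s, hsK, hx.1⟩)
    have hcards : ((imF s F \ F).card : ℝ) = ((r.im s (F : Set X) \ (F : Set X)).ncard : ℝ) := by
      have : (r.im s (F : Set X) \ (F : Set X)) = ((imF s F \ F : Finset X) : Set X) := by
        rw [Finset.coe_sdiff, himF_coe s F hdom]
      rw [this, Set.ncard_coe_finset]
    have h1 : F.card + (imF s F \ F).card ≤ (E F).card := by
      rw [← Finset.card_union_of_disjoint Finset.disjoint_sdiff]
      exact Finset.card_le_card hsubE
    have h2 : (F.card : ℝ) + ((imF s F \ F).card : ℝ) ≤ ((E F).card : ℝ) := by exact_mod_cast h1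
    rw [hcards] at h2
    nlinarith
  -- iteration
  have hiter : ∀ (N : ℕ) (F : Finset X), (F : Set X) ⊆ Y → F.Nonempty →
      ((E^[N] F : Finset X) : Set X) ⊆ Y ∧ (E^[N] F).Nonempty ∧
        (1+ε)^N * F.card ≤ ((E^[N] F).card : ℝ) := by
    intro N
    induction N with
    | zero => intro F hsub hne; simpa using ⟨hsub, hne⟩
    | succ N ih =>
      intro F hsub hne
      obtain ⟨ih1, ih2, ih3⟩ := ih F hsub hne
      rw [Function.iterate_succ_apply']
      refine ⟨hEY _ ih1, ih2.mono (hFsubE _), ?_⟩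
      calc (1+ε)^(N+1) * F.card = (1+ε) * ((1+ε)^N * F.card) := by ring
        _ ≤ (1+ε) * ((E^[N] F).card : ℝ) := by
            apply mul_le_mul_of_nonneg_left ih3 (by linarith)
        _ ≤ _ := hgrow _ ih2 ih1
  -- word sets
  set W : ℕ → Finset S := fun N =>
    Nat.rec ({1} : Finset S) (fun _ Wn => (insert (1:S) K).sup (fun s => Wn.image (fun w => s * w))) N
    with hWdef
  have hW0 : W 0 = {1} := rfl
  have hWs : ∀ N, W (N+1) = (insert (1:S) K).sup (fun s => (W N).image (fun w => s * w)) :=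
    fun N => rfl
  have hEYiter : ∀ (M : ℕ) (F : Finset X), (F : Set X) ⊆ Y → ((E^[M] F : Finset X) : Set X) ⊆ Y := by
    intro M
    induction M with
    | zero => intro F hsub; simpa using hsub
    | succ M ihM =>
      intro F hsub
      rw [Function.iterate_succ_apply']
      exact hEY _ (ihM F hsub)
  have hcover : ∀ (N : ℕ) (F : Finset X), (F : Set X) ⊆ Y →
      ((E^[N] F : Finset X) : Set X) ⊆ ⋃ w ∈ (W N : Finset S), r.im w (F : Set X) := by
    intro N
    induction N with
    | zero =>
      intro F hsub x hx
      apply Set.mem_biUnion (show (1:S) ∈ W 0 by rw [hW0]; exact Finset.mem_singleton_self 1)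
      rw [r.im_one]
      simpa using hx
    | succ N ih =>
      intro F hsub x hx
      rw [Function.iterate_succ_apply'] at hx
      have hENY : ((E^[N] F : Finset X) : Set X) ⊆ Y := hEYiter N F hsub
      simp only [hE, Finset.coe_union, Set.mem_union, Finset.mem_coe, Finset.mem_sup] at hx
      rcases hx with hx | ⟨s, hsK, hx⟩
      · obtain ⟨_, ⟨w, rfl⟩, hw⟩ := ih F hsub hx
        simp only [Set.mem_iUnion, exists_prop] at hw ⊢
        obtain ⟨hwW, hxw⟩ := hw
        refine ⟨w, ?_, hxw⟩
        rw [hWs N]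
        rw [Finset.mem_sup]
        exact ⟨1, Finset.mem_insert_self 1 _, by
          rw [Finset.mem_image]; exact ⟨w, hwW, one_mul w⟩⟩
      · have hdom : ((E^[N] F : Finset X) : Set X) ⊆ r.dom s := hENY.trans (r.Y_sub_dom hmin s)
        have hxim : x ∈ r.im s ((E^[N] F : Finset X) : Set X) := by
          rw [← himF_coe s _ hdom]; exact hx
        obtain ⟨g, hg, hgx⟩ := hxim
        obtain ⟨_, ⟨w, rfl⟩, hw⟩ := ih F hsub hg
        simp only [Set.mem_iUnion, exists_prop] at hw
        obtain ⟨hwW, hgw⟩ := hw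
        apply Set.mem_biUnion (show s * w ∈ W (N+1) by
          rw [hWs N, Finset.mem_sup]
          exact ⟨s, Finset.mem_insert_of_mem hsK, by
            rw [Finset.mem_image]; exact ⟨w, hwW, rfl⟩⟩)
        rw [r.im_comp]
        exact ⟨g, hgw, hgx⟩
  -- choose N with (1+ε)^N > 2
  obtain ⟨N, hN⟩ := pow_unbounded_of_one_lt (2:ℝ) (by linarith : (1:ℝ) < 1+ε)
  -- key doubling bound
  have hkey : ∀ F : Finset X, (F : Set X) ⊆ Y →
      2 * F.card ≤ ((W N).sup (fun w => imF w F)).card := by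
    intro F hsub
    rcases Finset.eq_empty_or_nonempty F with rfl | hne
    · simp
    obtain ⟨h1, h2, h3⟩ := hiter N F hsub hne
    have hsubW : E^[N] F ⊆ (W N).sup (fun w => imF w F) := by
      intro x hx
      have := hcover N F hsub hx
      obtain ⟨_, ⟨w, rfl⟩, hw⟩ := this
      simp only [Set.mem_iUnion, exists_prop] at hw
      obtain ⟨hwW, hxw⟩ := hw
      have hdom : (F : Set X) ⊆ r.dom w := hsub.trans (r.Y_sub_dom hmin w)
      rw [← himF_coe w F hdom] at hxw
      exact Finset.mem_sup.2 ⟨w, hwW, hxw⟩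
    have hcard1 : ((E^[N] F).card : ℝ) ≤ (((W N).sup (fun w => imF w F)).card : ℝ) := by
      exact_mod_cast Finset.card_le_card hsubW
    have hFpos : (1:ℝ) ≤ F.card := by exact_mod_cast Finset.card_pos.2 hne
    have : (2:ℝ) * F.card ≤ (((W N).sup (fun w => imF w F)).card : ℝ) := by
      calc (2:ℝ) * F.card ≤ (1+ε)^N * F.card := by nlinarith
        _ ≤ ((E^[N] F).card : ℝ) := h3
        _ ≤ _ := hcard1
    exact_mod_cast this
  -- Hall's theorem
  set Z := {x : X // x ∈ Y} with hZ
  set T : Z × Fin 2 → Finset X := fun p => (W N).image (fun w => ((r.α w) (p.1 : X)).getD (p.1 : X))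
    with hT
  have hhall : ∀ s : Finset (Z × Fin 2), s.card ≤ (s.biUnion T).card := by
    intro s
    set Fs : Finset X := s.image (fun p => (p.1 : X)) with hFs
    have hFsY : (Fs : Set X) ⊆ Y := by
      intro x hx
      simp only [hFs, Finset.coe_image, Set.mem_image, Finset.mem_coe] at hx
      obtain ⟨p, _, rfl⟩ := hx
      exact p.1.2
    have h1 : s.card ≤ 2 * Fs.card := by
      apply Finset.card_le_mul_card_image
      intro b _
      have hle : (Finset.filter (fun a => (a.1 : X) = b) s).card
          ≤ (Finset.univ : Finset (Fin 2)).card := by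
        apply Finset.card_le_card_of_injOn (fun p => p.2) (fun p _ => Finset.mem_univ p.2)
        intro p hp q hq hpq
        simp only [Finset.coe_filter, Set.mem_setOf_eq] at hp hq
        exact Prod.ext (Subtype.ext (hp.2.trans hq.2.symm)) hpq
      simpa using hle
    have h2 : (W N).sup (fun w => imF w Fs) ⊆ s.biUnion T := by
      intro x hx
      rw [Finset.mem_sup] at hx
      obtain ⟨w, hwW, hx⟩ := hx
      simp only [himF, Finset.mem_image] at hx
      obtain ⟨y, hy, rfl⟩ := hx
      simp only [hFs, Finset.mem_image] at hy
      obtain ⟨p, hp, rfl⟩ := hy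
      rw [Finset.mem_biUnion]
      refine ⟨p, hp, ?_⟩
      simp only [hT, Finset.mem_image]
      exact ⟨w, hwW, rfl⟩
    calc s.card ≤ 2 * Fs.card := h1
      _ ≤ ((W N).sup (fun w => imF w Fs)).card := hkey Fs hFsY
      _ ≤ (s.biUnion T).card := Finset.card_le_card h2
  obtain ⟨Φ, hΦinj, hΦmem⟩ := (Finset.all_card_le_biUnion_card_iff_exists_injective T).1 hhall
  have hΦ : ∀ p : Z × Fin 2, ∃ w, w ∈ W N ∧ (r.α w) (p.1 : X) = some (Φ p) := by
    intro p
    have := hΦmem p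
    simp only [hT, Finset.mem_image] at this
    obtain ⟨w, hwW, hw⟩ := this
    refine ⟨w, hwW, ?_⟩
    have hdom : (p.1 : X) ∈ r.dom w := r.Y_sub_dom hmin w p.1.2
    obtain ⟨z, hz⟩ := Option.isSome_iff_exists.1 hdom
    rw [hz]
    rw [hz] at hw
    simp only [Option.getD_some] at hw
    rw [hw]
  choose wf hwfmem hwf using hΦ
  have hΦY : ∀ p : Z × Fin 2, Φ p ∈ Y := fun p => r.mem_Y_of_alpha hmin p.1.2 (hwf p)
  -- index the words
  set n' := (W N).card with hn'
  set ω : Fin n' → S := fun i => ((W N).equivFin.symm i : S) with hω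
  set k : Z × Fin 2 → Fin n' := fun p => (W N).equivFin ⟨wf p, hwfmem p⟩ with hk
  have hωk : ∀ p, ω (k p) = wf p := by
    intro p
    simp only [hω, hk, Equiv.symm_apply_apply]
  -- the pieces
  set P : Fin n' → Set X := fun i => {x | ∃ hx : x ∈ Y, k (⟨x, hx⟩, 0) = i} with hP
  set Q : Fin n' → Set X := fun i => {x | ∃ hx : x ∈ Y, k (⟨x, hx⟩, 1) = i} with hQ
  have hPY : ∀ i, P i ⊆ Y := fun i x hx => hx.1
  have hQY : ∀ i, Q i ⊆ Y := fun i x hx => hx.1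
  set As : Fin n' → Set X := fun i => r.im (ω i) (P i) with hAs
  set Bs : Fin n' → Set X := fun i => r.im (ω i) (Q i) with hBs
  have hmemAs : ∀ (i : Fin n') (y : X), y ∈ As i ↔ ∃ z : Z, k (z, 0) = i ∧ Φ (z, 0) = y := by
    intro i y
    constructor
    · rintro ⟨x, ⟨hx, hki⟩, hxy⟩
      refine ⟨⟨x, hx⟩, hki, ?_⟩
      have h1 : (r.α (ω i)) x = some (Φ (⟨x, hx⟩, 0)) := by
        rw [← hki, hωk]
        exact hwf (⟨x, hx⟩, 0)
      rw [h1] at hxy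
      exact (Option.some_injective _ hxy)
    · rintro ⟨z, hki, rfl⟩
      refine ⟨(z : X), ⟨z.2, ?_⟩, ?_⟩
      · rwa [Subtype.coe_eta]
      · rw [← hki, hωk]
        have : (⟨(z : X), z.2⟩ : Z) = z := Subtype.coe_eta z z.2
        rw [show ((⟨(z:X), z.2⟩ : Z), (0 : Fin 2)) = (z, (0:Fin 2)) by rw [this]]
        exact hwf (z, 0)
  have hmemBs : ∀ (i : Fin n') (y : X), y ∈ Bs i ↔ ∃ z : Z, k (z, 1) = i ∧ Φ (z, 1) = y := by
    intro i y
    constructor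
    · rintro ⟨x, ⟨hx, hki⟩, hxy⟩
      refine ⟨⟨x, hx⟩, hki, ?_⟩
      have h1 : (r.α (ω i)) x = some (Φ (⟨x, hx⟩, 1)) := by
        rw [← hki, hωk]
        exact hwf (⟨x, hx⟩, 1)
      rw [h1] at hxy
      exact (Option.some_injective _ hxy)
    · rintro ⟨z, hki, rfl⟩
      refine ⟨(z : X), ⟨z.2, ?_⟩, ?_⟩
      · rwa [Subtype.coe_eta]
      · rw [← hki, hωk]
        have : (⟨(z : X), z.2⟩ : Z) = z := Subtype.coe_eta z z.2
        rw [show ((⟨(z:X), z.2⟩ : Z), (1 : Fin 2)) = (z, (1:Fin 2)) by rw [this]]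
        exact hwf (z, 1)
  have hAsY : ∀ i, As i ⊆ Y := fun i => r.im_sub_Y hmin (hPY i)
  have hBsY : ∀ i, Bs i ⊆ Y := fun i => r.im_sub_Y hmin (hQY i)
  have himAs : ∀ i, r.im (star (ω i)) (As i) = P i := fun i =>
    r.im_star_im ((hPY i).trans (r.Y_sub_dom hmin (ω i)))
  have himBs : ∀ i, r.im (star (ω i)) (Bs i) = Q i := fun i =>
    r.im_star_im ((hQY i).trans (r.Y_sub_dom hmin (ω i)))
  have hPdis : ∀ i j, i ≠ j → Disjoint (P i) (P j) := by
    intro i j hij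
    rw [Set.disjoint_left]
    rintro x ⟨hx, hki⟩ ⟨hx', hkj⟩
    exact hij (hki ▸ hkj ▸ rfl)
  have hQdis : ∀ i j, i ≠ j → Disjoint (Q i) (Q j) := by
    intro i j hij
    rw [Set.disjoint_left]
    rintro x ⟨hx, hki⟩ ⟨hx', hkj⟩
    exact hij (hki ▸ hkj ▸ rfl)
  have hPun : (⋃ i, P i) = Y := by
    apply Set.Subset.antisymm
    · exact Set.iUnion_subset hPY
    · intro x hx
      exact Set.mem_iUnion.2 ⟨k (⟨x, hx⟩, 0), hx, rfl⟩
  have hQun : (⋃ i, Q i) = Y := by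
    apply Set.Subset.antisymm
    · exact Set.iUnion_subset hQY
    · intro x hx
      exact Set.mem_iUnion.2 ⟨k (⟨x, hx⟩, 1), hx, rfl⟩
  -- assemble
  refine ⟨n', n', fun i => star (ω i), fun i => star (ω i), As, Bs,
    hAsY, hBsY,
    fun i => (hAsY i).trans (r.Y_sub_dom hmin _),
    fun i => (hBsY i).trans (r.Y_sub_dom hmin _),
    ?_, ?_, ?_, ?_, ?_, ?_, ?_⟩
  · -- As pairwise disjoint
    intro i j hij
    rw [Set.disjoint_left]
    intro y hyi hyj
    obtain ⟨z, hkz, hΦz⟩ := (hmemAs i y).1 hyi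
    obtain ⟨z', hkz', hΦz'⟩ := (hmemAs j y).1 hyj
    have : (z, (0:Fin 2)) = (z', 0) := hΦinj (hΦz.trans hΦz'.symm)
    have hzz : z = z' := (Prod.ext_iff.1 this).1
    exact hij (hkz ▸ hkz' ▸ (by rw [hzz]))
  · -- Bs pairwise disjoint
    intro i j hij
    rw [Set.disjoint_left]
    intro y hyi hyj
    obtain ⟨z, hkz, hΦz⟩ := (hmemBs i y).1 hyi
    obtain ⟨z', hkz', hΦz'⟩ := (hmemBs j y).1 hyj
    have : (z, (1:Fin 2)) = (z', 1) := hΦinj (hΦz.trans hΦz'.symm)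
    have hzz : z = z' := (Prod.ext_iff.1 this).1
    exact hij (hkz ▸ hkz' ▸ (by rw [hzz]))
  · -- As vs Bs disjoint
    intro i j
    rw [Set.disjoint_left]
    intro y hyi hyj
    obtain ⟨z, hkz, hΦz⟩ := (hmemAs i y).1 hyi
    obtain ⟨z', hkz', hΦz'⟩ := (hmemBs j y).1 hyj
    have : (z, (0:Fin 2)) = (z', 1) := hΦinj (hΦz.trans hΦz'.symm)
    have h2 := (Prod.ext_iff.1 this).2
    simp at h2
  · -- images of As pairwise disjoint
    intro i j hij
    rw [himAs i, himAs j]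
    exact hPdis i j hij
  · -- images of Bs pairwise disjoint
    intro i j hij
    rw [himBs i, himBs j]
    exact hQdis i j hij
  · -- union of images of As
    calc (⋃ i, r.im (star (ω i)) (As i)) = ⋃ i, P i := by
          exact Set.iUnion_congr himAs
      _ = Y := hPun
  · calc (⋃ i, r.im (star (ω i)) (Bs i)) = ⋃ i, Q i := by
          exact Set.iUnion_congr himBs
      _ = Y := hQun

end InverseSemigroupRep

/-- For a representation of a countable discrete unital inverse semigroup `S` possessing a
minimal projection `e₀ ∈ E(S)`, the following are equivalent: (1) `X` is `S`-amenable;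
(2) `D_{e₀}` is not `S`-paradoxical; (3) `D_{e₀}` is `S`-domain Følner. -/
theorem statement14 {S X : Type*} [Monoid S] [Star S] [IsInverseSemigroup S] [Countable S]
    (r : InverseSemigroupRep S X) (e₀ : S)
    (he₀ : ∃ s : S, e₀ = star s * s)
    (hmin : ∀ f : S, (∃ s : S, f = star s * s) → e₀ * f = e₀) :
    (r.SAmenableSet (Set.univ : Set X) ↔ ¬ r.SParadoxical (r.dom e₀)) ∧
    (r.SAmenableSet (Set.univ : Set X) ↔ r.SDomainFolner (r.dom e₀)) := by
  have h1 : r.SAmenableSet (Set.univ : Set X) → ¬ r.SParadoxical (r.dom e₀) :=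
    r.not_paradoxical_of_amenable
  have h2 : ¬ r.SParadoxical (r.dom e₀) → r.SDomainFolner (r.dom e₀) := by
    intro h
    by_contra hf
    exact h (r.paradoxical_of_not_folner hmin hf)
  have h3 : r.SDomainFolner (r.dom e₀) → r.SAmenableSet (Set.univ : Set X) :=
    r.amenable_of_folner hmin
  exact ⟨⟨h1, fun hnp => h3 (h2 hnp)⟩, ⟨fun ha => h2 (h1 ha), h3⟩⟩
end

section
/- Let α be a representation of a countable discrete unital inverse semigroup S on a set X. If A ⊆ X is S-domain Følner, then for every ε > 0 and every finite 𝓕 ⊆ S there is a finite non-empty F₀ ⊆ A such that |α_s(F₀ ∩ D_{s*s}) \ F₀| ≤ ε|F₀| for every s ∈ 𝓕 and F₀ has exactly one ≈-equivalence class, i.e., u ≈ v for all u, v ∈ F₀. -/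
open scoped ENNReal

section Aux

variable {S X : Type*} [Monoid S] [Star S] (r : InverseSemigroupRep S X)

lemma aux_inj (s : S) : ∀ a a' b, b ∈ r.α s a → b ∈ r.α s a' → a = a' :=
  fun _ _ _ h h' => (r.α s).inj h h'

/-- The relation `u ≈ v`. -/
def auxRel (u v : X) : Prop := ∃ s : S, u ∈ r.dom s ∧ (r.α s) u = some v

lemma auxRel_refl (u : X) : auxRel r u u := by
  refine ⟨1, ?_, ?_⟩ <;>
    simp [InverseSemigroupRep.dom, r.map_one, PEquiv.refl_apply]

lemma auxRel_symm {u v : X} (h : auxRel r u v) : auxRel r v u := by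
  obtain ⟨s, _, hs⟩ := h
  have h1 : (r.α (star s)) v = some u := by
    rw [r.map_star]; exact (PEquiv.eq_some_iff (r.α s)).2 hs
  exact ⟨star s, by simp [InverseSemigroupRep.dom, h1], h1⟩

lemma auxRel_trans {u v w : X} (h : auxRel r u v) (h' : auxRel r v w) :
    auxRel r u w := by
  obtain ⟨s, _, hs⟩ := h
  obtain ⟨t, _, ht⟩ := h'
  have h1 : (r.α (t * s)) u = some w := by
    rw [r.map_mul]
    show ((r.α s) u).bind (r.α t) = some w
    rw [hs]; exact ht
  exact ⟨t * s, by simp [InverseSemigroupRep.dom, h1], h1⟩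

/-- `≈` as a setoid. -/
def auxSetoid : Setoid X :=
  ⟨auxRel r, ⟨auxRel_refl r, auxRel_symm r, auxRel_trans r⟩⟩

lemma aux_im_eq (s : S) (G : Finset X) :
    r.im s ((G : Set X) ∩ r.dom s) = ↑(G.filterMap (r.α s) (aux_inj r s)) := by
  ext y
  simp only [InverseSemigroupRep.im, InverseSemigroupRep.dom, Set.mem_setOf_eq,
    Finset.coe_filterMap, Set.mem_inter_iff, Finset.mem_coe, Option.mem_def]
  constructor
  · rintro ⟨x, ⟨hxG, _⟩, hx⟩; exact ⟨x, hxG, hx⟩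
  · rintro ⟨x, hxG, hx⟩; exact ⟨x, ⟨hxG, by rw [hx]; rfl⟩, hx⟩

end Aux

/-- If `A ⊆ X` is `S`-domain Følner then for every `ε > 0` and finite `𝓕 ⊆ S` there is a
finite non-empty `(ε, 𝓕)`-domain Følner subset `F₀ ⊆ A` with exactly one equivalence class
for the relation `u ≈ v ⟺ ∃ s, u ∈ D_{s*s} ∧ α_s(u) = v`. -/
theorem statement16 {S X : Type*} [Monoid S] [Star S] [IsInverseSemigroup S] [Countable S]
    (r : InverseSemigroupRep S X) (A : Set X) (hA : r.SDomainFolner A) :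
    ∀ ε : ℝ, 0 < ε → ∀ 𝓕 : Finset S, ∃ F₀ : Finset X, F₀.Nonempty ∧ (F₀ : Set X) ⊆ A ∧
      (∀ s ∈ 𝓕,
        ((r.im s ((F₀ : Set X) ∩ r.dom s) \ (F₀ : Set X)).ncard : ℝ) ≤ ε * F₀.card) ∧
      (∀ u ∈ F₀, ∀ v ∈ F₀, ∃ s : S, u ∈ r.dom s ∧ (r.α s) u = some v) := by
  classical
  intro ε hε 𝓕
  obtain ⟨F, hFne, hFA, hFol⟩ := hA
  set ε' : ℝ := ε / (𝓕.card + 1) with hε'def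
  have hε' : 0 < ε' := by positivity
  -- find a single Følner set good for all s ∈ 𝓕 with constant ε'
  have hev : ∀ᶠ n in Filter.atTop, ∀ s ∈ 𝓕,
      ((r.im s ((F n : Set X) ∩ r.dom s) \ (F n : Set X)).ncard : ℝ)
        ≤ ε' * (F n).card := by
    rw [Filter.eventually_all_finset]
    intro s _
    filter_upwards [(hFol s).eventually (gt_mem_nhds hε')] with n hn
    have hcard : (0:ℝ) < (F n).card := by exact_mod_cast (hFne n).card_pos
    rw [div_lt_iff₀ hcard] at hn
    linarith [hn]
  obtain ⟨n, hn⟩ := hev.exists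
  set G : Finset X := F n with hGdef
  have hGne : G.Nonempty := hFne n
  have hGA : (G : Set X) ⊆ A := hFA n
  -- equivalence classes within G
  letI σ : Setoid X := auxSetoid r (S := S)
  set T : Finset (Quotient σ) := G.image (Quotient.mk σ) with hTdef
  set C : Quotient σ → Finset X :=
    fun q => G.filter (fun x => Quotient.mk σ x = q) with hCdef
  -- boundary finsets
  set B : S → Quotient σ → Finset X :=
    fun s q => ((C q).filterMap (r.α s) (aux_inj r s)) \ G with hBdef
  set BG : S → Finset X := fun s => (G.filterMap (r.α s) (aux_inj r s)) \ G with hBGdef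
  have hCsub : ∀ q, C q ⊆ G := fun q => Finset.filter_subset _ _
  -- key: boundary of a class relative to the class = relative to G
  have hBeq : ∀ (s : S) (q : Quotient σ),
      ((C q).filterMap (r.α s) (aux_inj r s)) \ (C q) = B s q := by
    intro s q
    ext y
    simp only [hBdef, Finset.mem_sdiff, Finset.mem_filterMap, and_congr_right_iff]
    rintro ⟨x, hxC, hxy⟩
    have hrel : auxRel r x y := ⟨s, by simp [InverseSemigroupRep.dom, hxy], hxy⟩
    have hq : Quotient.mk σ y = q := by
      rw [← (Finset.mem_filter.1 hxC).2]
      exact Quotient.sound (auxRel_symm r hrel)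
    constructor
    · intro hyC hyG
      exact hyC (Finset.mem_filter.2 ⟨hyG, hq⟩)
    · intro hyG hyC
      exact hyG ((hCsub q) hyC)
  -- per-s disjointness and subset, hence the sum bound
  have hsum_le : ∀ s : S, (∑ q ∈ T, (B s q).card) ≤ (BG s).card := by
    intro s
    have hdisj : ∀ q ∈ T, ∀ q' ∈ T, q ≠ q' → Disjoint (B s q) (B s q') := by
      intro q _ q' _ hqq'
      rw [Finset.disjoint_left]
      intro y hy hy'
      obtain ⟨hy1, -⟩ := Finset.mem_sdiff.1 hy
      obtain ⟨hy1', -⟩ := Finset.mem_sdiff.1 hy'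
      obtain ⟨x, hxC, hxy⟩ := (Finset.mem_filterMap _).1 hy1
      obtain ⟨x', hxC', hxy'⟩ := (Finset.mem_filterMap _).1 hy1'
      have : x = x' := (r.α s).inj hxy hxy'
      subst this
      exact hqq' ((Finset.mem_filter.1 hxC).2 ▸ (Finset.mem_filter.1 hxC').2.symm ▸ rfl)
    rw [← Finset.card_biUnion hdisj]
    apply Finset.card_le_card
    intro y hy
    obtain ⟨q, -, hyq⟩ := Finset.mem_biUnion.1 hy
    obtain ⟨hy1, hy2⟩ := Finset.mem_sdiff.1 hyq
    obtain ⟨x, hxC, hxy⟩ := (Finset.mem_filterMap _).1 hy1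
    exact Finset.mem_sdiff.2 ⟨(Finset.mem_filterMap _).2 ⟨x, hCsub _ hxC, hxy⟩, hy2⟩
  -- the Følner bound for BG
  have hBG_le : ∀ s ∈ 𝓕, ((BG s).card : ℝ) ≤ ε' * G.card := by
    intro s hs
    have := hn s hs
    rwa [show r.im s ((G : Set X) ∩ r.dom s) \ (G : Set X) = ↑(BG s) by
        rw [aux_im_eq, hBGdef, Finset.coe_sdiff],
      Set.ncard_coe_finset] at this
  -- total double sum bound
  have hcardG : G.card = ∑ q ∈ T, (C q).card :=
    Finset.card_eq_sum_card_fiberwise (fun x hx => Finset.mem_image_of_mem _ hx)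
  have hTne : T.Nonempty := hGne.image _
  have htotal : (∑ q ∈ T, ∑ s ∈ 𝓕, ((B s q).card : ℝ)) < ε * ∑ q ∈ T, ((C q).card : ℝ) := by
    rw [Finset.sum_comm]
    calc (∑ s ∈ 𝓕, ∑ q ∈ T, ((B s q).card : ℝ))
        ≤ ∑ s ∈ 𝓕, ε' * G.card := by
          apply Finset.sum_le_sum
          intro s hs
          calc (∑ q ∈ T, ((B s q).card : ℝ)) = ((∑ q ∈ T, (B s q).card : ℕ) : ℝ) := by
                push_cast; ring
            _ ≤ ((BG s).card : ℝ) := by exact_mod_cast hsum_le s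
            _ ≤ ε' * G.card := hBG_le s hs
      _ = 𝓕.card * ε' * G.card := by rw [Finset.sum_const, nsmul_eq_mul]; ring
      _ < ε * G.card := by
          have h1 : (0:ℝ) < G.card := by exact_mod_cast hGne.card_pos
          have h2 : (𝓕.card : ℝ) * ε' < ε := by
            have hc : (0:ℝ) ≤ (𝓕.card:ℝ) := Nat.cast_nonneg _
            have he : ε' * ((𝓕.card:ℝ)+1) = ε := by rw [hε'def]; field_simp
            nlinarith [hε']
          nlinarith
      _ = ε * ∑ q ∈ T, ((C q).card : ℝ) := by
          rw [hcardG]; push_cast; ring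
  -- pick a good class
  have hgood : ∃ q ∈ T, (∑ s ∈ 𝓕, ((B s q).card : ℝ)) ≤ ε * (C q).card := by
    by_contra hcon
    push_neg at hcon
    have := Finset.sum_lt_sum_of_nonempty hTne
      (f := fun q => ε * ((C q).card : ℝ))
      (g := fun q => ∑ s ∈ 𝓕, ((B s q).card : ℝ))
      (fun q hq => hcon q hq)
    rw [← Finset.mul_sum] at this
    exact absurd htotal (not_lt.2 this.le)
  obtain ⟨q, hqT, hq⟩ := hgood
  refine ⟨C q, ?_, ?_, ?_, ?_⟩
  · obtain ⟨x, hxG, hxq⟩ := Finset.mem_image.1 hqT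
    exact ⟨x, Finset.mem_filter.2 ⟨hxG, hxq⟩⟩
  · exact fun x hx => hGA (hCsub q hx)
  · intro s hs
    have heq : r.im s ((C q : Set X) ∩ r.dom s) \ (C q : Set X) = ↑(B s q) := by
      rw [aux_im_eq, ← hBeq s q, Finset.coe_sdiff]
    rw [heq, Set.ncard_coe_finset]
    calc ((B s q).card : ℝ)
        ≤ ∑ s' ∈ 𝓕, ((B s' q).card : ℝ) :=
          Finset.single_le_sum (f := fun s' => ((B s' q).card : ℝ))
            (fun s' _ => by positivity) hs
      _ ≤ ε * (C q).card := hq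
  · intro u hu v hv
    have h1 : Quotient.mk σ u = q := (Finset.mem_filter.1 hu).2
    have h2 : Quotient.mk σ v = q := (Finset.mem_filter.1 hv).2
    exact Quotient.exact (h1.trans h2.symm)
end
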